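/- arXiv:2504.02549 — 2 statements merged into one kernel-verified Lean document; each statement's English description precedes it below -/
import Mathlib

section
/- Let ũ = (u_1,…,u_n) ∈ tder_n. The following are equivalent: (i) ρ(ũ)(x_1+⋯+x_n) = 0 (i.e. ũ ∈ sder_n); (ii) ∂_j u_i = ∂^i u_j for all 1 ≤ i, j ≤ n; (iii) ρ(ũ)(η_gr(a,b)) = η_gr(ρ(ũ)(a), b) + η_gr(a, ρ(ũ)(b)) for all a, b ∈ ass_n. -/
noncomputable section

open scoped TensorProduct

attribute [instance 100] LieRing.ofAssociativeRing

/-- The free unital associative algebra over `ℚ` on `N` generators. -/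
abbrev Ass (N : ℕ) : Type := FreeAlgebra ℚ (Fin N)

/-- The `i`-th generator `x_i`. -/
def gen {N : ℕ} (i : Fin N) : Ass N := FreeAlgebra.ι ℚ i

/-- The monomial (word) associated to a list of generator indices. -/
def wordProd {N : ℕ} (l : List (Fin N)) : Ass N := (l.map gen).prod

/-- Extend a function on words (monomials) to a `ℚ`-linear map on the free algebra,
using the monomial basis. -/
def liftWord {N : ℕ} {A : Type} [AddCommGroup A] [Module ℚ A]
    (f : List (Fin N) → A) : Ass N →ₗ[ℚ] A :=
  (FreeAlgebra.basisFreeMonoid ℚ (Fin N)).constr ℚ fun w => f w.toList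

/-- `μ_gr` on a word. -/
def muWord {N : ℕ} : List (Fin N) → Ass N
  | [] => 0
  | [_] => 0
  | a :: b :: t => (if a = b then -(wordProd (a :: t)) else 0) + gen a * muWord (b :: t)

/-- The linearized self-intersection operation `μ_gr`. -/
def muGr (N : ℕ) : Ass N →ₗ[ℚ] Ass N := liftWord muWord

/-- The antipode: the anti-automorphism `ι` with `ι(x_i) = -x_i`, as a linear map. -/
def iotaMap (N : ℕ) : Ass N →ₗ[ℚ] Ass N :=
  liftWord fun l => ((-1 : ℚ) ^ l.length) • wordProd l.reverse

/-- The (right) partial derivative `∂_i`, characterized on `lie_N` by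
`a = Σ_i (∂_i a) x_i`. -/
def partialD {N : ℕ} (i : Fin N) : Ass N →ₗ[ℚ] Ass N :=
  liftWord fun l =>
    match l.getLast? with
    | some a => if a = i then wordProd l.dropLast else 0
    | none => 0

/-- `η_gr` on a pair of words. -/
def etaWord {N : ℕ} (l r : List (Fin N)) : Ass N :=
  match l.getLast?, r with
  | some a, b :: t => if a = b then -(wordProd (l.dropLast ++ a :: t)) else 0
  | _, _ => 0

/-- The linearized homotopy intersection form `η_gr`. -/
def etaGr (N : ℕ) : Ass N →ₗ[ℚ] Ass N →ₗ[ℚ] Ass N :=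
  liftWord fun l => liftWord fun r => etaWord l r

/-- Degree-`k` homogeneous part of a free algebra (word-length grading). -/
def homogS (X : Type) (k : ℕ) : Submodule ℚ (FreeAlgebra ℚ X) :=
  Submodule.span ℚ {z | ∃ l : List X, l.length = k ∧ z = (l.map (FreeAlgebra.ι ℚ)).prod}

/-- The projection onto the degree-`k` homogeneous component. -/
def homogComp {N : ℕ} (k : ℕ) : Ass N →ₗ[ℚ] Ass N :=
  liftWord fun l => if l.length = k then wordProd l else 0

/-- The free Lie algebra on `x_1, …, x_N`, as the Lie subalgebra of `Ass N`
(with the commutator bracket) generated by the generators. -/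
def lieN (N : ℕ) : LieSubalgebra ℚ (Ass N) :=
  LieSubalgebra.lieSpan ℚ (Ass N) (Set.range (gen (N := N)))

/-- The generator `x_i` as an element of `lie_N`. -/
def genL (N : ℕ) (i : Fin N) : lieN N :=
  ⟨gen i, LieSubalgebra.subset_lieSpan ⟨i, rfl⟩⟩

/-- Substitution: the algebra endomorphism of `ass_2` with `x ↦ p`, `y ↦ q`. -/
def sub2 (p q : Ass 2) : Ass 2 →ₐ[ℚ] Ass 2 := FreeAlgebra.lift ℚ ![p, q]

/-- `x`. -/
def xA : Ass 2 := gen 0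
/-- `y`. -/
def yA : Ass 2 := gen 1

/-- Equation (E1): `φ(y,0) − φ(x+y,0) = 0`. -/
def E1 (φ : Ass 2) : Prop := sub2 yA 0 φ - sub2 (xA + yA) 0 φ = 0

/-- Equation (E2): `(∂_y φ) + (∂_y φ)(y,0) − (∂_y φ)(x+y,0) − R(φ) = 0`,
where `R` is the restriction of `μ_gr` to `lie_2`. -/
def E2 (φ : Ass 2) : Prop :=
  partialD 1 φ + sub2 yA 0 (partialD 1 φ) - sub2 (xA + yA) 0 (partialD 1 φ) - muGr 2 φ = 0

/-- Equation (E3): `[x, φ(y,x)] + [y, φ(x,y)] = 0`. -/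
def E3 (φ : Ass 2) : Prop := ⁅xA, sub2 yA xA φ⁆ + ⁅yA, φ⁆ = 0

/-- `ν^em(φ) = (φ(y,x), φ(x,y))`. -/
def nuEm (φ : Ass 2) : Fin 2 → Ass 2 := ![sub2 yA xA φ, φ]

/-- The space `grt_1^em` of solutions to the linearized emergent equations. -/
def grt1em : Set (Ass 2) := {φ | φ ∈ lieN 2 ∧ E1 φ ∧ E2 φ ∧ E3 φ}

/-- The derivation `ρ(ũ)` on a word. -/
def rhoWord {N : ℕ} (u : Fin N → Ass N) : List (Fin N) → Ass N
  | [] => 0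
  | a :: t => ⁅gen a, u a⁆ * wordProd t + gen a * rhoWord u t

/-- The tangential derivation `ρ(ũ)`, determined by `ρ(ũ)(x_i) = [x_i, u_i]`. -/
def rho {N : ℕ} (u : Fin N → Ass N) : Ass N →ₗ[ℚ] Ass N := liftWord (rhoWord u)

/-- The span of commutators in `ass_N`. -/
def trRel (N : ℕ) : Submodule ℚ (Ass N) :=
  Submodule.span ℚ {z | ∃ a b : Ass N, z = a * b - b * a}

/-- The trace space `tr_N = ass_N/[ass_N, ass_N]`. -/
abbrev Tr (N : ℕ) : Type := Ass N ⧸ trRel N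

/-- The projection `|·| : ass_N → tr_N`. -/
def trM (N : ℕ) : Ass N →ₗ[ℚ] Tr N := (trRel N).mkQ

/-- The divergence `div(ũ) = Σ_i |x_i (∂_i u_i)|`. -/
def divergence {N : ℕ} (u : Fin N → Ass N) : Tr N :=
  ∑ i, trM N (gen i * partialD i (u i))

/-- `ũ ∈ tder_N`: all components lie in `lie_N`. -/
def IsTDer {N : ℕ} (u : Fin N → Ass N) : Prop := ∀ i, u i ∈ lieN N

/-- `ũ ∈ sder_N`. -/
def IsSDer {N : ℕ} (u : Fin N → Ass N) : Prop := IsTDer u ∧ rho u (∑ i, gen i) = 0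

/-- `ũ ∈ krv_N`. -/
def IsKRV {N : ℕ} (u : Fin N → Ass N) : Prop :=
  IsSDer u ∧ ∃ f : Fin (N + 1) → Polynomial ℚ,
    divergence u =
      trM N (Polynomial.aeval (∑ i, gen i) (f 0)) +
        ∑ i : Fin N, trM N (Polynomial.aeval (gen i) (f i.succ))

/-- `ũ ∈ krv_N^0`. -/
def IsKRV0 {N : ℕ} (u : Fin N → Ass N) : Prop :=
  IsSDer u ∧ ∃ cf : Fin N → ℚ, divergence u = ∑ i, cf i • trM N (gen i)

/-- The swap `u(x,y) ↦ u(y,x)`. -/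
def swapA : Ass 2 →ₐ[ℚ] Ass 2 := sub2 yA xA

/-- `ũ ∈ krv_2^sym`. -/
def IsKRVsym (u : Fin 2 → Ass 2) : Prop := IsKRV u ∧ u 1 = swapA (u 0)


/-- The coproduct `Δ` on `ass_N`, with `Δ(x_i) = x_i ⊗ 1 + 1 ⊗ x_i`. -/
def comulA (N : ℕ) : Ass N →ₐ[ℚ] (Ass N ⊗[ℚ] Ass N) :=
  FreeAlgebra.lift ℚ fun i => gen i ⊗ₜ[ℚ] (1 : Ass N) + (1 : Ass N) ⊗ₜ[ℚ] gen i

/-- `μ_{r,gr} = ((|·|∘mult) ⊗ id) ∘ (id ⊗ ((ι ⊗ id) ∘ Δ)) ∘ (id ⊗ μ_gr) ∘ Δ`. -/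
def muR (N : ℕ) : Ass N →ₗ[ℚ] Tr N ⊗[ℚ] Ass N :=
  (TensorProduct.map ((trM N).comp (LinearMap.mul' ℚ (Ass N))) LinearMap.id).comp <|
    ((TensorProduct.assoc ℚ (Ass N) (Ass N) (Ass N)).symm.toLinearMap).comp <|
      (TensorProduct.map LinearMap.id
          ((TensorProduct.map (iotaMap N) LinearMap.id).comp (comulA N).toLinearMap)).comp <|
        (TensorProduct.map LinearMap.id (muGr N)).comp (comulA N).toLinearMap

/-- `Alt(a ⊗ b) = a ⊗ b - b ⊗ a`. -/
def altMap (N : ℕ) : Tr N ⊗[ℚ] Tr N →ₗ[ℚ] Tr N ⊗[ℚ] Tr N :=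
  LinearMap.id - (TensorProduct.comm ℚ (Tr N) (Tr N)).toLinearMap

/-- The linearized Turaev cobracket `δ_gr = Alt ∘ (id ⊗ |·|) ∘ μ_{r,gr}`. -/
def Dgr (N : ℕ) : Ass N →ₗ[ℚ] Tr N ⊗[ℚ] Tr N :=
  (altMap N).comp ((TensorProduct.map LinearMap.id (trM N)).comp (muR N))

/-- Index type of the generators `t_{pq}` (`p ≠ q`) of the Drinfeld–Kohno Lie algebra. -/
def dkGenIdx (N : ℕ) : Type := {pq : Fin N × Fin N // pq.1 ≠ pq.2}

abbrev FLdk (N : ℕ) := FreeLieAlgebra ℚ (dkGenIdx N)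

def tFree {N : ℕ} (p q : Fin N) (h : p ≠ q) : FLdk N := FreeLieAlgebra.of ℚ ⟨(p, q), h⟩

/-- The defining relations of `dk_N`: symmetry, commutation and 4T. -/
def dkRels (N : ℕ) : Set (FLdk N) :=
  {z | ∃ (p q : Fin N) (h : p ≠ q), z = tFree p q h - tFree q p h.symm} ∪
  {z | ∃ (p q r s : Fin N) (hpq : p ≠ q) (hrs : r ≠ s),
      p ≠ r ∧ p ≠ s ∧ q ≠ r ∧ q ≠ s ∧ z = ⁅tFree p q hpq, tFree r s hrs⁆} ∪
  {z | ∃ (p q r : Fin N) (hpq : p ≠ q) (hqr : q ≠ r) (hpr : p ≠ r),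
      z = ⁅tFree p q hpq + tFree q r hqr, tFree p r hpr⁆}

def dkIdeal (N : ℕ) : LieIdeal ℚ (FLdk N) := LieSubmodule.lieSpan ℚ (FLdk N) (dkRels N)

/-- The Drinfeld–Kohno Lie algebra `dk_N`. -/
abbrev dk (N : ℕ) := FLdk N ⧸ dkIdeal N

/-- The generator `t_{pq}` of `dk_N`. -/
def tGen {N : ℕ} (p q : Fin N) (h : p ≠ q) : dk N :=
  LieSubmodule.Quotient.mk (N := dkIdeal N) (tFree p q h)

/-- Index type of the generators of the mixed Drinfeld–Kohno Lie algebra `dk_{m,n}`: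
pairs of distinct indices in `Fin (m+n)`, not both poles (i.e., not both `< m`). -/
def MIdx (m n : ℕ) : Type :=
  {pq : Fin (m + n) × Fin (m + n) // pq.1 ≠ pq.2 ∧ (m ≤ (pq.1 : ℕ) ∨ m ≤ (pq.2 : ℕ))}

abbrev FLmix (m n : ℕ) := FreeLieAlgebra ℚ (MIdx m n)

def tMix {m n : ℕ} (p q : Fin (m + n)) (h : p ≠ q)
    (hm : m ≤ (p : ℕ) ∨ m ≤ (q : ℕ)) : FLmix m n :=
  FreeLieAlgebra.of ℚ ⟨(p, q), h, hm⟩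

/-- The defining relations of `dk_{m,n}`: exactly the symmetry, commutation and 4T relations
of `dk_{m+n}` involving only mixed pairs. -/
def mixRels (m n : ℕ) : Set (FLmix m n) :=
  {z | ∃ (p q : Fin (m + n)) (h : p ≠ q) (hm : m ≤ (p : ℕ) ∨ m ≤ (q : ℕ)),
      z = tMix p q h hm - tMix q p h.symm hm.symm} ∪
  {z | ∃ (p q r s : Fin (m + n)) (hpq : p ≠ q) (hmpq : m ≤ (p : ℕ) ∨ m ≤ (q : ℕ))
      (hrs : r ≠ s) (hmrs : m ≤ (r : ℕ) ∨ m ≤ (s : ℕ)),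
      p ≠ r ∧ p ≠ s ∧ q ≠ r ∧ q ≠ s ∧ z = ⁅tMix p q hpq hmpq, tMix r s hrs hmrs⁆} ∪
  {z | ∃ (p q r : Fin (m + n)) (hpq : p ≠ q) (hmpq : m ≤ (p : ℕ) ∨ m ≤ (q : ℕ))
      (hqr : q ≠ r) (hmqr : m ≤ (q : ℕ) ∨ m ≤ (r : ℕ))
      (hpr : p ≠ r) (hmpr : m ≤ (p : ℕ) ∨ m ≤ (r : ℕ)),
      z = ⁅tMix p q hpq hmpq + tMix q r hqr hmqr, tMix p r hpr hmpr⁆}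

def mixIdeal (m n : ℕ) : LieIdeal ℚ (FLmix m n) :=
  LieSubmodule.lieSpan ℚ (FLmix m n) (mixRels m n)

/-- The mixed Drinfeld–Kohno Lie algebra `dk_{m,n}`. -/
abbrev dkmn (m n : ℕ) := FLmix m n ⧸ mixIdeal m n

lemma castAdd_ne_natAdd {m n : ℕ} (i : Fin m) (j : Fin n) :
    Fin.castAdd n i ≠ Fin.natAdd m j := by
  intro h
  have hv := congrArg Fin.val h
  simp only [Fin.coe_castAdd, Fin.coe_natAdd] at hv
  have := i.isLt
  omega

lemma natAdd_ne {m n : ℕ} {u v : Fin n} (h : u ≠ v) :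
    Fin.natAdd m u ≠ Fin.natAdd m v := by
  intro hh
  exact h (by
    have hv := congrArg Fin.val hh
    simp only [Fin.coe_natAdd] at hv
    exact Fin.ext (by omega))

lemma natAdd_le_left (m : ℕ) {n : ℕ} (j : Fin n) : m ≤ (Fin.natAdd m j : ℕ) := by
  simp only [Fin.coe_natAdd]; omega

/-- The generator `a_{ij}` of `dk_{m,n}` (0-indexed): `a_{ij} = t_{i(m+j)}`. -/
def aG {m n : ℕ} (i : Fin m) (j : Fin n) : dkmn m n :=
  LieSubmodule.Quotient.mk (N := mixIdeal m n)
    (tMix (Fin.castAdd n i) (Fin.natAdd m j) (castAdd_ne_natAdd i j)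
      (Or.inr (natAdd_le_left m j)))

/-- The generator `c_{ij}` of `dk_{m,n}` (0-indexed): `c_{ij} = t_{(m+i)(m+j)}`. -/
def cG {m n : ℕ} (u v : Fin n) (h : u ≠ v) : dkmn m n :=
  LieSubmodule.Quotient.mk (N := mixIdeal m n)
    (tMix (Fin.natAdd m u) (Fin.natAdd m v) (natAdd_ne h)
      (Or.inl (natAdd_le_left m u)))

/-- The Lie ideal `c` of `dk_{m,n}` generated by the `c_{ij}`. -/
def cId (m n : ℕ) : LieIdeal ℚ (dkmn m n) :=
  LieSubmodule.lieSpan ℚ (dkmn m n) {z | ∃ (u v : Fin n) (h : u ≠ v), z = cG u v h}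

/-- The Lie ideal `[c,c]`. -/
def ccId (m n : ℕ) : LieIdeal ℚ (dkmn m n) := ⁅cId m n, cId m n⁆

/-- The emergent Drinfeld–Kohno Lie algebra `edk_{m,n} = dk_{m,n}/[c,c]`. -/
abbrev edk (m n : ℕ) := dkmn m n ⧸ ccId m n

/-- Projection `dk_{m,n} → edk_{m,n}` as a function. -/
def eprojF (m n : ℕ) : dkmn m n → edk m n := LieSubmodule.Quotient.mk (N := ccId m n)

/-- Projection `dk_{m,n} → edk_{m,n}` as a `ℚ`-linear map. -/
def eproj (m n : ℕ) : dkmn m n →ₗ[ℚ] edk m n := (ccId m n).toSubmodule.mkQ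

/-- `a_{ij}` in `edk_{m,n}`. -/
def aGE {m n : ℕ} (i : Fin m) (j : Fin n) : edk m n := eprojF m n (aG i j)

/-- `c_{ij}` in `edk_{m,n}`. -/
def cGE {m n : ℕ} (u v : Fin n) (h : u ≠ v) : edk m n := eprojF m n (cG u v h)

/-- The canonical Lie algebra map `FreeLieAlgebra ℚ (Fin m) → ass_m`,
whose image is `lie_m`. -/
def toAssL (m : ℕ) : FreeLieAlgebra ℚ (Fin m) →ₗ⁅ℚ⁆ FreeAlgebra ℚ (Fin m) :=
  FreeLieAlgebra.lift ℚ (FreeAlgebra.ι ℚ)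

/-- `u ↦ u_i` (at `dk` level): the Lie algebra map with `x_p ↦ a_{pi}`. -/
def uEldk {m n : ℕ} (i : Fin n) : FreeLieAlgebra ℚ (Fin m) →ₗ⁅ℚ⁆ dkmn m n :=
  FreeLieAlgebra.lift ℚ fun p => aG p i

/-- `u ↦ u_i`: the Lie algebra map `lie_m → edk_{m,n}` with `x_p ↦ a_{pi}`. -/
def uEl {m n : ℕ} (i : Fin n) : FreeLieAlgebra ℚ (Fin m) →ₗ⁅ℚ⁆ edk m n :=
  FreeLieAlgebra.lift ℚ fun p => aGE p i

/-- Iterated bracketing `[a_{p₁ j}, [a_{p₂ j}, [… , [a_{p_d j}, ξ]…]]]`. -/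
def adWApply {m n : ℕ} (j : Fin n) : List (Fin m) → edk m n → edk m n
  | [], ξ => ξ
  | p :: t, ξ => ⁅aGE p j, adWApply j t ξ⁆


/-- `w ↦ w_{uv}`: the linear map `ass_m → edk_{m,n}` with
`1 ↦ c_{uv}` and `(x_{p₁}⋯x_{p_d}) ↦ [a_{p₁ v}, [… [a_{p_d v}, c_{uv}]…]]`. -/
def wEl {m n : ℕ} (u v : Fin n) (h : u ≠ v) : Ass m →ₗ[ℚ] edk m n :=
  liftWord fun l => adWApply v l (cGE u v h)

/-- `ad_w^{(l)}(ξ)`, linear in `w`. -/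
def adOp {m n : ℕ} (l : Fin n) (ξ : edk m n) : Ass m →ₗ[ℚ] edk m n :=
  liftWord fun lst => adWApply l lst ξ

/-- Degree-`k` part of the free Lie algebra (generators of degree 1), realized as the
preimage of the degree-`k` part of the free associative algebra under the canonical map. -/
def flHomog (X : Type) (k : ℕ) : Submodule ℚ (FreeLieAlgebra ℚ X) :=
  Submodule.comap
    (FreeLieAlgebra.lift ℚ (FreeAlgebra.ι ℚ (X := X)) :
      FreeLieAlgebra ℚ X →ₗ⁅ℚ⁆ FreeAlgebra ℚ X).toLinearMap
    (homogS X k)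

/-- Degree-`k` part of `edk_{m,n}`. -/
def edkHomog (m n : ℕ) (k : ℕ) : Submodule ℚ (edk m n) :=
  (((flHomog (MIdx m n) k).map (mixIdeal m n).toSubmodule.mkQ)).map (eproj m n)

-- Fin helper lemmas
lemma castSucc_ne_of_ne {n : ℕ} {u v : Fin n} (h : u ≠ v) :
    Fin.castSucc u ≠ Fin.castSucc v := fun hh => h (Fin.castSucc_injective n hh)

lemma succ_ne_of_ne {n : ℕ} {u v : Fin n} (h : u ≠ v) :
    Fin.succ u ≠ Fin.succ v := fun hh => h (Fin.succ_injective n hh)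

lemma castSucc_ne_last {n : ℕ} (u : Fin n) : Fin.castSucc u ≠ Fin.last n :=
  (Fin.castSucc_lt_last u).ne

lemma castSucc_ne_succ_of_le {n : ℕ} {u v : Fin n} (h : u ≤ v) :
    Fin.castSucc u ≠ Fin.succ v := by
  intro hh
  have hv := congrArg Fin.val hh
  simp only [Fin.coe_castSucc, Fin.val_succ] at hv
  have := Fin.le_def.mp h
  omega

/-- `D` is the pole coface map `δ_k : dk_{m,n} → dk_{m+1,n}`, `0 ≤ k ≤ m`
(1-indexed `k`; `k = 0` is extension on the left). -/
def IsDeltaPole (m n : ℕ) (k : ℕ) (D : dkmn m n →ₗ⁅ℚ⁆ dkmn (m + 1) n) : Prop :=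
  (∀ (i : Fin m) (j : Fin n),
     (((i : ℕ) + 1 < k) → D (aG i j) = aG (Fin.castSucc i) j) ∧
     (((i : ℕ) + 1 = k) → D (aG i j) = aG (Fin.castSucc i) j + aG (Fin.succ i) j) ∧
     ((k < (i : ℕ) + 1) → D (aG i j) = aG (Fin.succ i) j)) ∧
  (∀ (u v : Fin n) (h : u ≠ v), D (cG u v h) = cG u v h)

/-- `D` is the strand coface map `δ_{m+κ} : dk_{m,n} → dk_{m,n+1}`, `1 ≤ κ ≤ n+1`
(1-indexed strand `κ`; `κ = n+1` is extension on the right). -/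
def IsDeltaStrand (m n : ℕ) (κ : ℕ) (D : dkmn m n →ₗ⁅ℚ⁆ dkmn m (n + 1)) : Prop :=
  (∀ (i : Fin m) (j : Fin n),
     (((j : ℕ) + 1 < κ) → D (aG i j) = aG i (Fin.castSucc j)) ∧
     (((j : ℕ) + 1 = κ) → D (aG i j) = aG i (Fin.castSucc j) + aG i (Fin.succ j)) ∧
     ((κ < (j : ℕ) + 1) → D (aG i j) = aG i (Fin.succ j))) ∧
  (∀ (u v : Fin n) (h : u < v),
     (((v : ℕ) + 1 < κ) →
        D (cG u v h.ne) = cG (Fin.castSucc u) (Fin.castSucc v) (castSucc_ne_of_ne h.ne)) ∧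
     (((v : ℕ) + 1 = κ) →
        D (cG u v h.ne) = cG (Fin.castSucc u) (Fin.castSucc v) (castSucc_ne_of_ne h.ne)
          + cG (Fin.castSucc u) (Fin.succ v) (castSucc_ne_succ_of_le h.le)) ∧
     (((u : ℕ) + 1 < κ ∧ κ < (v : ℕ) + 1) →
        D (cG u v h.ne) = cG (Fin.castSucc u) (Fin.succ v) (castSucc_ne_succ_of_le h.le)) ∧
     (((u : ℕ) + 1 = κ) →
        D (cG u v h.ne) = cG (Fin.castSucc u) (Fin.succ v) (castSucc_ne_succ_of_le h.le)
          + cG (Fin.succ u) (Fin.succ v) (succ_ne_of_ne h.ne)) ∧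
     ((κ < (u : ℕ) + 1) →
        D (cG u v h.ne) = cG (Fin.succ u) (Fin.succ v) (succ_ne_of_ne h.ne)))

/-- `T` is `ϑ_{m+1} : dk_{m+1,n} → dk_{m,n+1}` (the last pole becomes the first strand). -/
def IsTheta (m n : ℕ) (T : dkmn (m + 1) n →ₗ⁅ℚ⁆ dkmn m (n + 1)) : Prop :=
  (∀ (i : Fin (m + 1)) (j : Fin n),
     (∀ hi : (i : ℕ) < m, T (aG i j) = aG ⟨i, hi⟩ (Fin.succ j)) ∧
     ((i : ℕ) = m → T (aG i j) = cG 0 (Fin.succ j) (Fin.succ_ne_zero j).symm)) ∧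
  (∀ (u v : Fin n) (h : u ≠ v), T (cG u v h) = cG (Fin.succ u) (Fin.succ v) (succ_ne_of_ne h))

/-- The coface map `d_k : dk_{m,n} → dk_{m,n+1}`, built from the data of the pole
cofaces, the strand cofaces, and `ϑ_{m+1}`. -/
def coface (m n : ℕ) (Dp : ℕ → (dkmn m n →ₗ⁅ℚ⁆ dkmn (m + 1) n))
    (Ds : ℕ → (dkmn m n →ₗ⁅ℚ⁆ dkmn m (n + 1)))
    (T : dkmn (m + 1) n →ₗ⁅ℚ⁆ dkmn m (n + 1)) (k : ℕ) :
    dkmn m n →ₗ⁅ℚ⁆ dkmn m (n + 1) :=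
  if k ≤ m then T.comp (Dp k) else Ds (k - m)

/-- The algebra map `ass_{m'+1} → ass_{m'}` with `x_p ↦ x_p` (`p < m'`) and `x_{m'} ↦ 0`. -/
def setLast0A (m' : ℕ) : Ass (m' + 1) →ₐ[ℚ] Ass m' :=
  FreeAlgebra.lift ℚ fun p : Fin (m' + 1) =>
    if h : (p : ℕ) < m' then gen ⟨p, h⟩ else 0

/-- The Lie algebra map `FreeLie (Fin (m'+1)) → FreeLie (Fin m')` setting the last
generator to `0`. -/
def flSetLast0 (m' : ℕ) : FreeLieAlgebra ℚ (Fin (m' + 1)) →ₗ⁅ℚ⁆ FreeLieAlgebra ℚ (Fin m') :=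
  FreeLieAlgebra.lift ℚ fun p : Fin (m' + 1) =>
    if h : (p : ℕ) < m' then FreeLieAlgebra.of ℚ ⟨p, h⟩ else 0



namespace S15

variable {N : ℕ}

lemma wordProd_nil : wordProd ([] : List (Fin N)) = 1 := rfl

lemma wordProd_cons (a : Fin N) (l : List (Fin N)) :
    wordProd (a :: l) = gen a * wordProd l := by simp [wordProd]

lemma wordProd_append (l m : List (Fin N)) :
    wordProd (l ++ m) = wordProd l * wordProd m := by simp [wordProd]

lemma basis_apply (w : FreeMonoid (Fin N)) :
    FreeAlgebra.basisFreeMonoid ℚ (Fin N) w = wordProd w.toList := by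
  unfold FreeAlgebra.basisFreeMonoid FreeAlgebra.equivMonoidAlgebraFreeMonoid
  simp only [Module.Basis.map_apply, Finsupp.coe_basisSingleOne, AlgEquiv.toLinearEquiv_symm,
    AlgEquiv.toLinearEquiv_apply, AlgEquiv.ofAlgHom_symm_apply]
  erw [MonoidAlgebra.lift_single, FreeMonoid.lift_apply]
  rw [one_smul]; rfl

lemma liftWord_word {A : Type} [AddCommGroup A] [Module ℚ A] (f : List (Fin N) → A)
    (l : List (Fin N)) : liftWord f (wordProd l) = f l := by
  have h := Module.Basis.constr_basis (FreeAlgebra.basisFreeMonoid ℚ (Fin N)) ℚ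
    (fun w : FreeMonoid (Fin N) => f w.toList) (FreeMonoid.ofList l)
  rw [basis_apply, FreeMonoid.toList_ofList] at h
  exact h

lemma liftWord_one {A : Type} [AddCommGroup A] [Module ℚ A] (f : List (Fin N) → A) :
    liftWord f (1 : Ass N) = f [] := liftWord_word f []

lemma liftWord_ext {A : Type} [AddCommGroup A] [Module ℚ A] {f g : Ass N →ₗ[ℚ] A}
    (h : ∀ l, f (wordProd l) = g (wordProd l)) : f = g :=
  Module.Basis.ext (FreeAlgebra.basisFreeMonoid ℚ (Fin N)) fun w => by
    rw [basis_apply]; exact h _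

lemma word_induction {P : Ass N → Prop} (hw : ∀ l, P (wordProd l))
    (hz : P 0) (hadd : ∀ a b, P a → P b → P (a + b))
    (hsmul : ∀ (c : ℚ) a, P a → P (c • a)) (a : Ass N) : P a := by
  have hmem : a ∈ Submodule.span ℚ (Set.range (wordProd (N := N))) := by
    refine Submodule.span_mono ?_ (Module.Basis.mem_span (FreeAlgebra.basisFreeMonoid ℚ (Fin N)) a)
    rintro _ ⟨w, rfl⟩; exact ⟨w.toList, (basis_apply w).symm⟩
  exact Submodule.span_induction (fun x hx => by obtain ⟨l, rfl⟩ := hx; exact hw l)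
    hz (fun x y _ _ px py => hadd x y px py) (fun c x _ px => hsmul c x px) hmem

/-- The counit: coefficient of the empty word. -/
def epsQ (N : ℕ) : Ass N →ₗ[ℚ] ℚ := liftWord fun l => if l = [] then 1 else 0

/-- Left strip: removes a leading `x_j`. -/
def lam (j : Fin N) : Ass N →ₗ[ℚ] Ass N :=
  liftWord fun l => match l with
    | [] => 0
    | a :: t => if a = j then wordProd t else 0

lemma wordProd_singleton (i : Fin N) : wordProd [i] = gen i := by simp [wordProd]

lemma epsQ_word (l : List (Fin N)) : epsQ N (wordProd l) = if l = [] then 1 else 0 :=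
  liftWord_word _ l

lemma epsQ_one : epsQ N 1 = 1 := by simpa [wordProd_nil] using epsQ_word ([] : List (Fin N))

lemma epsQ_gen (i : Fin N) : epsQ N (gen i) = 0 := by
  have h := epsQ_word [i]
  simpa [wordProd_singleton] using h

lemma epsQ_mul (a b : Ass N) : epsQ N (a * b) = epsQ N a * epsQ N b := by
  induction a using word_induction with
  | hz => simp
  | hadd x y hx hy => simp [add_mul, hx, hy]
  | hsmul c x hx =>
    rw [smul_mul_assoc, map_smul, hx, map_smul, smul_eq_mul, smul_eq_mul]; ring
  | hw l =>
    induction b using word_induction with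
    | hz => simp
    | hadd x y hx hy => simp [mul_add, hx, hy]
    | hsmul c x hx => simp [mul_smul_comm, hx, mul_left_comm]
    | hw m =>
      rw [← wordProd_append, epsQ_word, epsQ_word, epsQ_word]
      rcases l with _ | ⟨a, t⟩ <;> simp

lemma iota_word (l : List (Fin N)) :
    iotaMap N (wordProd l) = ((-1 : ℚ) ^ l.length) • wordProd l.reverse :=
  liftWord_word _ l

lemma iota_one : iotaMap N 1 = 1 := by simpa [wordProd_nil] using iota_word ([] : List (Fin N))

lemma iota_gen (i : Fin N) : iotaMap N (gen i) = -gen i := by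
  have h := iota_word [i]
  simpa [wordProd_singleton] using h

lemma iota_mul (a b : Ass N) : iotaMap N (a * b) = iotaMap N b * iotaMap N a := by
  induction a using word_induction with
  | hz => simp
  | hadd x y hx hy => simp [add_mul, hx, hy, mul_add]
  | hsmul c x hx => simp [smul_mul_assoc, hx, mul_smul_comm]
  | hw l =>
    induction b using word_induction with
    | hz => simp
    | hadd x y hx hy => simp [mul_add, hx, hy, add_mul]
    | hsmul c x hx => simp [mul_smul_comm, hx, smul_mul_assoc]
    | hw m =>
      rw [← wordProd_append, iota_word, iota_word, iota_word]
      rw [List.reverse_append, List.length_append, wordProd_append]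
      rw [smul_mul_assoc, mul_smul_comm, smul_smul, pow_add, mul_comm]

lemma iota_iota (a : Ass N) : iotaMap N (iotaMap N a) = a := by
  induction a using word_induction with
  | hz => simp
  | hadd x y hx hy => simp [hx, hy]
  | hsmul c x hx => simp [hx]
  | hw l =>
    rw [iota_word, map_smul, iota_word, List.length_reverse, List.reverse_reverse,
      smul_smul, ← pow_add, ← two_mul, pow_mul]
    norm_num

lemma lam_gen_mul (j k : Fin N) (v : Ass N) :
    lam j (gen k * v) = if k = j then v else 0 := by
  induction v using word_induction with
  | hz => simp
  | hadd x y hx hy => rw [mul_add, map_add, hx, hy]; split <;> simp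
  | hsmul c x hx => rw [mul_smul_comm, map_smul, hx]; split <;> simp
  | hw l =>
    rw [← wordProd_cons]
    exact liftWord_word _ (k :: l)

lemma partialD_word (i : Fin N) (l : List (Fin N)) :
    partialD i (wordProd l) =
      match l.getLast? with
      | some a => if a = i then wordProd l.dropLast else 0
      | none => 0 := liftWord_word _ l

lemma partialD_one (i : Fin N) : partialD i (1 : Ass N) = 0 := by
  have h := partialD_word i []; simpa [wordProd_nil] using h

lemma partialD_concat (i : Fin N) (t : List (Fin N)) (a : Fin N) :
    partialD i (wordProd (t ++ [a])) = if a = i then wordProd t else 0 := by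
  rw [partialD_word]
  simp [List.getLast?_concat]

lemma partialD_gen (i k : Fin N) : partialD i (gen k) = if k = i then 1 else 0 := by
  have h := partialD_concat i [] k
  simpa [wordProd_singleton, wordProd_nil] using h

lemma partialD_mul_gen (i k : Fin N) (v : Ass N) :
    partialD i (v * gen k) = if k = i then v else 0 := by
  induction v using word_induction with
  | hz => simp
  | hadd x y hx hy => rw [add_mul, map_add, hx, hy]; split <;> simp
  | hsmul c x hx => rw [smul_mul_assoc, map_smul, hx]; split <;> simp
  | hw l =>
    rw [show wordProd l * gen k = wordProd (l ++ [k]) by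
      rw [wordProd_append, wordProd_singleton]]
    exact partialD_concat i l k

lemma partialD_gen_mul (i k : Fin N) (v : Ass N) :
    partialD i (gen k * v) =
      gen k * partialD i v + epsQ N v • (if k = i then (1 : Ass N) else 0) := by
  induction v using word_induction with
  | hz => simp
  | hadd x y hx hy =>
    rw [mul_add, map_add, hx, hy, map_add, map_add, add_smul, mul_add]; abel
  | hsmul c x hx =>
    rw [mul_smul_comm, map_smul, hx, map_smul, map_smul, smul_add, mul_smul_comm,
      smul_assoc]
  | hw l =>
    rcases l.eq_nil_or_concat with rfl | ⟨t, a, rfl⟩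
    · rw [wordProd_nil, mul_one, epsQ_one, partialD_one, mul_zero, zero_add, one_smul,
        partialD_gen]
    · rw [List.concat_eq_append,
        show gen k * wordProd (t ++ [a]) = wordProd ((k :: t) ++ [a]) from by
          rw [← wordProd_cons]; rfl,
        partialD_concat, partialD_concat, epsQ_word, wordProd_cons]
      simp [mul_ite]

lemma decomp (a : Ass N) :
    a = epsQ N a • 1 + ∑ i, partialD i a * gen i := by
  induction a using word_induction with
  | hz => simp
  | hadd x y hx hy =>
    simp only [map_add, add_smul, add_mul, Finset.sum_add_distrib]
    conv_lhs => rw [hx, hy]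
    abel
  | hsmul c x hx =>
    simp only [map_smul, smul_assoc, smul_mul_assoc, ← Finset.smul_sum]
    conv_lhs => rw [hx]
    rw [smul_add]
  | hw l =>
    rcases l.eq_nil_or_concat with rfl | ⟨t, a, rfl⟩
    · simp [epsQ_one, partialD_one, wordProd_nil]
    · rw [List.concat_eq_append, epsQ_word, if_neg (by simp), zero_smul, zero_add]
      rw [Finset.sum_congr rfl (fun i _ => by rw [partialD_concat, ite_mul, zero_mul])]
      rw [Finset.sum_ite_eq, if_pos (Finset.mem_univ a), wordProd_append, wordProd_singleton]

def goodSub (N : ℕ) : LieSubalgebra ℚ (Ass N) where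
  carrier := {a | epsQ N a = 0 ∧ iotaMap N a = -a}
  add_mem' := by
    rintro a b ⟨ha1, ha2⟩ ⟨hb1, hb2⟩
    exact ⟨by simp [ha1, hb1], by rw [map_add, ha2, hb2, neg_add]⟩
  zero_mem' := by simp
  smul_mem' := by
    rintro c a ⟨h1, h2⟩
    exact ⟨by simp [h1], by simp [h2]⟩
  lie_mem' := by
    rintro a b ⟨ha1, ha2⟩ ⟨hb1, hb2⟩
    constructor
    · rw [Ring.lie_def, map_sub, epsQ_mul, epsQ_mul, ha1, hb1]; ring
    · rw [Ring.lie_def, map_sub, iota_mul, iota_mul, ha2, hb2]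
      noncomm_ring

lemma lie_mem_good {a : Ass N} (ha : a ∈ lieN N) :
    epsQ N a = 0 ∧ iotaMap N a = -a := by
  have h : lieN N ≤ goodSub N := by
    rw [lieN, LieSubalgebra.lieSpan_le]
    rintro _ ⟨i, rfl⟩
    exact ⟨epsQ_gen i, by rw [iota_gen]⟩
  exact h ha

lemma lie_eps {a : Ass N} (ha : a ∈ lieN N) : epsQ N a = 0 := (lie_mem_good ha).1

lemma lie_decomp_left {a : Ass N} (ha : a ∈ lieN N) :
    a = ∑ i, gen i * iotaMap N (partialD i a) := by
  obtain ⟨he, hi⟩ := lie_mem_good ha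
  have hd := decomp a
  rw [he, zero_smul, zero_add] at hd
  have h2 := congrArg (iotaMap N) hd
  rw [hi, map_sum] at h2
  have h3 : ∀ i ∈ Finset.univ, iotaMap N (partialD i a * gen i)
      = -(gen i * iotaMap N (partialD i a)) := fun i _ => by
    rw [iota_mul, iota_gen, neg_mul]
  rw [Finset.sum_congr rfl h3, Finset.sum_neg_distrib] at h2
  exact neg_injective h2

-- rho lemmas
lemma rho_word (u : Fin N → Ass N) (l : List (Fin N)) :
    rho u (wordProd l) = rhoWord u l := liftWord_word _ l

lemma rho_one (u : Fin N → Ass N) : rho u (1 : Ass N) = 0 := by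
  have h := rho_word u []
  rwa [wordProd_nil] at h

lemma rho_gen (u : Fin N → Ass N) (i : Fin N) :
    rho u (gen i) = gen i * u i - u i * gen i := by
  have h := rho_word u [i]
  rw [wordProd_singleton] at h
  rw [h]
  show ⁅gen i, u i⁆ * wordProd [] + gen i * rhoWord u [] = _
  rw [Ring.lie_def, wordProd_nil, mul_one]
  show _ + gen i * 0 = _
  rw [mul_zero, add_zero]

lemma rhoWord_append (u : Fin N → Ass N) (l m : List (Fin N)) :
    rhoWord u (l ++ m) = rhoWord u l * wordProd m + wordProd l * rhoWord u m := by
  induction l with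
  | nil =>
    show rhoWord u m = rhoWord u [] * wordProd m + wordProd [] * rhoWord u m
    show rhoWord u m = 0 * wordProd m + wordProd [] * rhoWord u m
    rw [zero_mul, wordProd_nil, one_mul, zero_add]
  | cons a t ih =>
    show ⁅gen a, u a⁆ * wordProd (t ++ m) + gen a * rhoWord u (t ++ m) = _
    rw [ih, wordProd_append, wordProd_cons]
    show _ = (⁅gen a, u a⁆ * wordProd t + gen a * rhoWord u t) * wordProd m
      + gen a * wordProd t * rhoWord u m
    rw [mul_add, add_mul]
    noncomm_ring

lemma rho_mul (u : Fin N → Ass N) (a b : Ass N) :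
    rho u (a * b) = rho u a * b + a * rho u b := by
  induction a using word_induction with
  | hz => simp
  | hadd x y hx hy =>
    simp only [map_add, add_mul, mul_add, hx, hy]; abel
  | hsmul c x hx =>
    simp only [map_smul, smul_mul_assoc, mul_smul_comm, smul_add, hx]
  | hw l =>
    induction b using word_induction with
    | hz => simp
    | hadd x y hx hy =>
      simp only [map_add, add_mul, mul_add, hx, hy]; abel
    | hsmul c x hx =>
      simp only [map_smul, smul_mul_assoc, mul_smul_comm, smul_add, hx]
    | hw m =>
      rw [← wordProd_append, rho_word, rho_word, rho_word, rhoWord_append]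

-- eta lemmas
lemma etaGr_word_word (l r : List (Fin N)) :
    etaGr N (wordProd l) (wordProd r) = etaWord l r := by
  have h1 : etaGr N (wordProd l) = liftWord (fun r => etaWord l r) := liftWord_word _ l
  rw [h1]
  exact liftWord_word _ r

lemma etaWord_nil_right (l : List (Fin N)) : etaWord l ([] : List (Fin N)) = 0 := by
  unfold etaWord
  cases h : l.getLast? <;> simp

lemma etaWord_concat_cons (t : List (Fin N)) (p q : Fin N) (s : List (Fin N)) :
    etaWord (t ++ [p]) (q :: s) = if p = q then -(wordProd (t ++ p :: s)) else 0 := by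
  unfold etaWord
  rw [List.getLast?_concat]
  simp [List.dropLast_concat]

lemma eta_one_left (b : Ass N) : etaGr N (1 : Ass N) b = 0 := by
  induction b using word_induction with
  | hz => simp
  | hadd x y hx hy => rw [map_add, hx, hy, add_zero]
  | hsmul c x hx => rw [map_smul, hx, smul_zero]
  | hw l =>
    rw [← wordProd_nil, etaGr_word_word]
    unfold etaWord
    cases l <;> rfl

lemma eta_one_right (a : Ass N) : etaGr N a (1 : Ass N) = 0 := by
  induction a using word_induction with
  | hz => simp
  | hadd x y hx hy => rw [map_add, LinearMap.add_apply, hx, hy, add_zero]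
  | hsmul c x hx => rw [map_smul, LinearMap.smul_apply, hx, smul_zero]
  | hw l =>
    rw [← wordProd_nil, etaGr_word_word, etaWord_nil_right]

lemma eta_word_concat (t : List (Fin N)) (p q : Fin N) (s : List (Fin N)) :
    etaGr N (wordProd (t ++ [p])) (wordProd (q :: s)) =
      if p = q then -(wordProd (t ++ p :: s)) else 0 := by
  rw [etaGr_word_word, etaWord_concat_cons]

lemma eta_mulgen_left (p q : Fin N) (s : List (Fin N)) (v : Ass N) :
    etaGr N (v * gen p) (wordProd (q :: s)) =
      if p = q then -(v * wordProd (p :: s)) else 0 := by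
  induction v using word_induction with
  | hz => split <;> simp
  | hadd x y hx hy =>
    rw [add_mul, map_add, LinearMap.add_apply, hx, hy]
    split <;> simp [add_mul] <;> abel
  | hsmul c x hx =>
    rw [smul_mul_assoc, map_smul, LinearMap.smul_apply, hx]
    split <;> simp [smul_mul_assoc]
  | hw l =>
    rw [show wordProd l * gen p = wordProd (l ++ [p]) from by
      rw [wordProd_append, wordProd_singleton], eta_word_concat]
    split
    · rw [show (l ++ p :: s) = l ++ (p :: s) from rfl, wordProd_append]
    · rfl

lemma eta_gen_mul_right (t : List (Fin N)) (p q : Fin N) (z : Ass N) :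
    etaGr N (wordProd (t ++ [p])) (gen q * z) =
      if p = q then -(wordProd (t ++ [p]) * z) else 0 := by
  induction z using word_induction with
  | hz => split <;> simp
  | hadd x y hx hy =>
    rw [mul_add, map_add, hx, hy]
    split <;> simp [mul_add] <;> abel
  | hsmul c x hx =>
    rw [mul_smul_comm, map_smul, hx]
    split <;> simp [mul_smul_comm]
  | hw m =>
    rw [show gen q * wordProd m = wordProd (q :: m) from (wordProd_cons q m).symm,
      eta_word_concat]
    split
    · rw [show (t ++ p :: m) = (t ++ [p]) ++ m from by simp, wordProd_append]
    · rfl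

lemma eta_mul_left (c : List (Fin N)) (q : Fin N) (s : List (Fin N)) (z : Ass N) :
    etaGr N (wordProd c * z) (wordProd (q :: s)) =
      -(wordProd c * partialD q z * wordProd (q :: s)) +
        epsQ N z • etaGr N (wordProd c) (wordProd (q :: s)) := by
  induction z using word_induction with
  | hz => simp
  | hadd x y hx hy =>
    rw [mul_add, map_add, LinearMap.add_apply, hx, hy, map_add, map_add, mul_add,
      add_mul, neg_add, add_smul]
    abel
  | hsmul c' x hx =>
    rw [mul_smul_comm, map_smul, LinearMap.smul_apply, hx, map_smul, map_smul,
      mul_smul_comm, smul_mul_assoc, smul_add, smul_neg, smul_assoc]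
  | hw l =>
    rcases l.eq_nil_or_concat with rfl | ⟨t', r, rfl⟩
    · rw [wordProd_nil, mul_one, partialD_one, mul_zero, zero_mul, neg_zero, zero_add,
        epsQ_one, one_smul]
    · rw [List.concat_eq_append, epsQ_word, if_neg (by simp), zero_smul, add_zero]
      rw [show wordProd c * wordProd (t' ++ [r]) = wordProd ((c ++ t') ++ [r]) from by
        rw [← wordProd_append, List.append_assoc], eta_word_concat, partialD_concat]
      by_cases hrq : r = q
      · subst hrq
        rw [if_pos rfl, if_pos rfl,
          show ((c ++ t') ++ r :: s) = c ++ (t' ++ (r :: s)) from by simp,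
          wordProd_append, wordProd_append, mul_assoc]
      · rw [if_neg hrq, if_neg hrq, mul_zero, zero_mul, neg_zero]

lemma eta_mul_right (t : List (Fin N)) (p : Fin N) (z d : Ass N) :
    etaGr N (wordProd (t ++ [p])) (z * d) =
      etaGr N (wordProd (t ++ [p])) z * d + epsQ N z • etaGr N (wordProd (t ++ [p])) d := by
  induction z using word_induction with
  | hz => simp
  | hadd x y hx hy =>
    rw [add_mul, map_add, hx, hy, map_add, add_mul, map_add, add_smul]
    abel
  | hsmul c x hx =>
    rw [smul_mul_assoc, map_smul, hx, map_smul, map_smul, smul_add, smul_mul_assoc,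
      smul_assoc]
  | hw m =>
    induction d using word_induction with
    | hz => simp
    | hadd x y hx hy =>
      rw [mul_add, map_add, hx, hy, map_add, mul_add, smul_add]
      abel
    | hsmul c x hx =>
      simp only [map_smul, mul_smul_comm, hx, smul_add]
      rw [smul_comm c]
    | hw m' =>
      rcases m with _ | ⟨r, m2⟩
      · rw [wordProd_nil, one_mul, epsQ_one, one_smul, eta_one_right, zero_mul, zero_add]
      · rw [show wordProd (r :: m2) * wordProd m' = wordProd (r :: (m2 ++ m')) from by
          rw [← wordProd_append]; rfl, eta_word_concat, eta_word_concat,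
          epsQ_word, if_neg (List.cons_ne_nil r m2), zero_smul, add_zero]
        by_cases hpr : p = r
        · rw [if_pos hpr, if_pos hpr, neg_mul,
            show (t ++ p :: (m2 ++ m')) = (t ++ p :: m2) ++ m' from by simp,
            wordProd_append]
        · rw [if_neg hpr, if_neg hpr, zero_mul]

lemma eta_X_right (a : Ass N) :
    etaGr N a (∑ i, gen i) = epsQ N a • 1 - a := by
  induction a using word_induction with
  | hz => simp
  | hadd x y hx hy =>
    rw [map_add, LinearMap.add_apply, hx, hy, map_add, add_smul]
    abel
  | hsmul c x hx =>
    rw [map_smul, LinearMap.smul_apply, hx, map_smul, smul_sub, smul_assoc]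
  | hw l =>
    rw [map_sum]
    rcases l.eq_nil_or_concat with rfl | ⟨t, a, rfl⟩
    · rw [wordProd_nil, epsQ_one, one_smul]
      rw [Finset.sum_congr rfl (fun j _ => eta_one_left (gen j))]
      simp
    · rw [List.concat_eq_append, epsQ_word, if_neg (by simp), zero_smul, zero_sub]
      rw [Finset.sum_congr rfl (fun j _ => by
        rw [show gen j = wordProd (j :: []) from (wordProd_singleton j).symm,
          eta_word_concat, show (t ++ a :: ([] : List (Fin N))) = t ++ [a] from rfl])]
      rw [Finset.sum_ite_eq, if_pos (Finset.mem_univ a)]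

lemma eta_X_left (b : Ass N) :
    etaGr N (∑ i, gen i) b = epsQ N b • 1 - b := by
  induction b using word_induction with
  | hz => simp
  | hadd x y hx hy =>
    rw [map_add, hx, hy, map_add, add_smul]
    abel
  | hsmul c x hx =>
    rw [map_smul, hx, map_smul, smul_sub, smul_assoc]
  | hw l =>
    rw [map_sum, LinearMap.sum_apply]
    rcases l with _ | ⟨q, s⟩
    · rw [wordProd_nil, epsQ_one, one_smul]
      rw [Finset.sum_congr rfl (fun j _ => eta_one_right (gen j))]
      simp
    · rw [epsQ_word, if_neg (by simp), zero_smul, zero_sub]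
      rw [Finset.sum_congr rfl (fun i _ => by
        rw [show gen i = wordProd (([] : List (Fin N)) ++ [i]) from
          (wordProd_singleton i).symm, eta_word_concat,
          show (([] : List (Fin N)) ++ i :: s) = i :: s from rfl])]
      rw [Finset.sum_ite_eq', if_pos (Finset.mem_univ q)]

lemma rho_sum_gen (u : Fin N → Ass N) :
    rho u (∑ i, gen i) = ∑ i, (gen i * u i - u i * gen i) := by
  rw [map_sum, Finset.sum_congr rfl fun i _ => rho_gen u i]

lemma eps_rho_X (u : Fin N → Ass N) (hu : ∀ i, u i ∈ lieN N) :
    epsQ N (rho u (∑ i, gen i)) = 0 := by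
  rw [rho_sum_gen, map_sum]
  refine Finset.sum_eq_zero fun i _ => ?_
  rw [map_sub, epsQ_mul, epsQ_mul, epsQ_gen, lie_eps (hu i)]
  ring

lemma partial_rho_X (u : Fin N → Ass N) (hu : ∀ i, u i ∈ lieN N) (i : Fin N) :
    partialD i (rho u (∑ k, gen k)) = (∑ k, gen k * partialD i (u k)) - u i := by
  rw [rho_sum_gen, map_sum]
  have h2 : ∀ k ∈ Finset.univ, partialD i (gen k * u k - u k * gen k)
      = gen k * partialD i (u k) - (if k = i then u k else 0) := fun k _ => by
    rw [map_sub, partialD_gen_mul, partialD_mul_gen, lie_eps (hu k), zero_smul, add_zero]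
  rw [Finset.sum_congr rfl h2, Finset.sum_sub_distrib, Finset.sum_ite_eq',
    if_pos (Finset.mem_univ i)]

lemma i_to_ii (u : Fin N → Ass N) (hu : ∀ i, u i ∈ lieN N)
    (h : rho u (∑ i, gen i) = 0) :
    ∀ i j, partialD j (u i) = iotaMap N (partialD i (u j)) := by
  have key : ∀ i j : Fin N, partialD i (u j) = iotaMap N (partialD j (u i)) := by
    intro i j
    have h1 := partial_rho_X u hu i
    rw [h, map_zero] at h1
    have h3 : ∑ k, gen k * partialD i (u k) = ∑ k, gen k * iotaMap N (partialD k (u i)) :=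
      (sub_eq_zero.mp h1.symm).trans (lie_decomp_left (hu i))
    have h4 := congrArg (lam j) h3
    rw [map_sum, map_sum,
      Finset.sum_congr rfl (fun k _ => lam_gen_mul j k (partialD i (u k))),
      Finset.sum_congr rfl (fun k _ => lam_gen_mul j k (iotaMap N (partialD k (u i)))),
      Finset.sum_ite_eq', Finset.sum_ite_eq', if_pos (Finset.mem_univ j),
      if_pos (Finset.mem_univ j)] at h4
    exact h4
  intro i j
  exact key j i

lemma ii_to_i (u : Fin N → Ass N) (hu : ∀ i, u i ∈ lieN N)
    (h : ∀ i j, partialD j (u i) = iotaMap N (partialD i (u j))) :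
    rho u (∑ i, gen i) = 0 := by
  have hpd : ∀ i, partialD i (rho u (∑ k, gen k)) = 0 := by
    intro i
    rw [partial_rho_X u hu i, sub_eq_zero]
    rw [Finset.sum_congr rfl (fun k _ => by rw [h k i] :
      ∀ k ∈ Finset.univ, gen k * partialD i (u k)
        = gen k * iotaMap N (partialD k (u i)))]
    exact (lie_decomp_left (hu i)).symm
  have hd := decomp (rho u (∑ k, gen k))
  rw [eps_rho_X u hu, zero_smul, zero_add] at hd
  rw [hd, Finset.sum_congr rfl (fun i _ => by rw [hpd i, zero_mul] :
    ∀ i ∈ Finset.univ, partialD i (rho u (∑ k, gen k)) * gen i = 0)]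
  exact Finset.sum_const_zero

lemma iii_to_i (u : Fin N → Ass N) (hu : ∀ i, u i ∈ lieN N)
    (h3 : ∀ a b, rho u (etaGr N a b) = etaGr N (rho u a) b + etaGr N a (rho u b)) :
    rho u (∑ i, gen i) = 0 := by
  have hX := h3 (∑ i, gen i) (∑ i, gen i)
  have hepsX : epsQ N (∑ i : Fin N, gen i) = 0 := by
    rw [map_sum]; exact Finset.sum_eq_zero fun i _ => epsQ_gen i
  have hXX : etaGr N (∑ i : Fin N, gen i) (∑ i : Fin N, gen i) = -(∑ i : Fin N, gen i) := by
    rw [eta_X_left, hepsX, zero_smul, zero_sub]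
  have heR := eps_rho_X u hu
  rw [hXX, map_neg, eta_X_left, eta_X_right, heR, zero_smul, zero_sub] at hX
  have h0 : -(rho u (∑ i, gen i)) + 0 = -(rho u (∑ i, gen i)) + -(rho u (∑ i, gen i)) := by
    rw [add_zero]; exact hX
  have h1 := add_left_cancel h0
  exact neg_eq_zero.mp h1.symm

lemma i_to_iii (u : Fin N → Ass N) (hu : ∀ i, u i ∈ lieN N)
    (hd : ∀ i j, partialD j (u i) = iotaMap N (partialD i (u j))) :
    ∀ a b, rho u (etaGr N a b) = etaGr N (rho u a) b + etaGr N a (rho u b) := by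
  intro a b
  induction a using word_induction with
  | hz => simp
  | hadd x y hx hy =>
    simp only [map_add, LinearMap.add_apply, hx, hy]; abel
  | hsmul c x hx =>
    simp only [map_smul, LinearMap.smul_apply, hx, smul_add]
  | hw l =>
    induction b using word_induction with
    | hz => simp
    | hadd x y hx hy =>
      simp only [map_add, hx, hy]; abel
    | hsmul c x hx =>
      simp only [map_smul, hx, smul_add]
    | hw r =>
      rcases l.eq_nil_or_concat with rfl | ⟨t, p, rfl⟩
      · rw [wordProd_nil, rho_one, eta_one_left, eta_one_left, map_zero, map_zero,
          LinearMap.zero_apply, zero_add]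
      rcases r with _ | ⟨q, s⟩
      · rw [wordProd_nil, rho_one, eta_one_right, eta_one_right, map_zero, map_zero,
          add_zero]
      rw [List.concat_eq_append]
      have hA : wordProd (t ++ [p]) = wordProd t * gen p := by
        rw [wordProd_append, wordProd_singleton]
      have hB : wordProd (q :: s) = gen q * wordProd s := wordProd_cons q s
      have hεp := lie_eps (hu p)
      have hεq := lie_eps (hu q)
      have hrA : rho u (wordProd (t ++ [p])) = rho u (wordProd t) * gen p +
          (wordProd (t ++ [p]) * u p - (wordProd t * u p) * gen p) := by
        conv_lhs => rw [hA]
        rw [rho_mul, rho_gen, hA]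
        noncomm_ring
      have hrB : rho u (wordProd (q :: s)) = gen q * (u q * wordProd s) -
          u q * (gen q * wordProd s) + gen q * rho u (wordProd s) := by
        conv_lhs => rw [hB]
        rw [rho_mul, rho_gen]
        noncomm_ring
      have p7 : etaGr N (wordProd (t ++ [p])) (u q) =
          -(wordProd (t ++ [p]) * partialD q (u p)) := by
        conv_lhs => rw [lie_decomp_left (hu q)]
        rw [map_sum,
          Finset.sum_congr rfl (fun k _ =>
            eta_gen_mul_right t p k (iotaMap N (partialD k (u q)))),
          Finset.sum_ite_eq, if_pos (Finset.mem_univ p), ← hd p q]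
      rw [hrA, hrB]
      simp only [map_add, map_sub, map_neg, LinearMap.add_apply, LinearMap.sub_apply,
        LinearMap.neg_apply]
      rw [eta_mulgen_left p q s (rho u (wordProd t)),
        eta_mul_left (t ++ [p]) q s (u p),
        eta_mulgen_left p q s (wordProd t * u p),
        eta_gen_mul_right t p q (u q * wordProd s),
        eta_mul_right t p (u q) (gen q * wordProd s),
        eta_gen_mul_right t p q (rho u (wordProd s)),
        eta_word_concat, p7, hεp, hεq, zero_smul, zero_smul, add_zero, add_zero]
      by_cases hpq : p = q
      · subst hpq
        rw [if_pos rfl, if_pos rfl, if_pos rfl, if_pos rfl, if_pos rfl,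
          show (t ++ p :: s) = (t ++ [p]) ++ s from by simp, wordProd_append,
          map_neg, rho_mul, hrA]
        simp only [hA, wordProd_cons]
        noncomm_ring
      · rw [if_neg hpq, if_neg hpq, if_neg hpq, if_neg hpq, if_neg hpq, map_zero]
        simp only [hA, wordProd_cons]
        noncomm_ring

end S15

/-- characterizations of `sder_n`. -/
theorem statement15 (n : ℕ) (u : Fin n → Ass n) (hu : IsTDer u) :
    ((rho u (∑ i, gen i) = 0) ↔
      (∀ i j : Fin n, partialD j (u i) = iotaMap n (partialD i (u j)))) ∧
    ((rho u (∑ i, gen i) = 0) ↔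
      (∀ a b : Ass n,
        rho u (etaGr n a b) = etaGr n (rho u a) b + etaGr n a (rho u b))) := by
  have hu' : ∀ i, u i ∈ lieN n := hu
  refine ⟨⟨S15.i_to_ii u hu', S15.ii_to_i u hu'⟩, ⟨fun h => ?_, S15.iii_to_i u hu'⟩⟩
  exact S15.i_to_iii u hu' (S15.i_to_ii u hu' h)

end
end

section
/- Let ũ ∈ tder_n. Then ũ ∈ krv_n^0 if and only if both of the following hold: (a) ρ(ũ)(η_gr(a,b)) = η_gr(ρ(ũ)(a), b) + η_gr(a, ρ(ũ)(b)) for all a, b ∈ ass_n; and (b) ρ(ũ) ∘ μ_gr = μ_gr ∘ ρ(ũ) as maps ass_n → ass_n. -/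
noncomputable section

open scoped TensorProduct

attribute [local instance 100] LieRing.ofAssociativeRing

namespace SKRV17
open scoped BigOperators

variable {N : ℕ}

lemma wordProd_nil : wordProd ([] : List (Fin N)) = 1 := rfl
lemma wordProd_cons (a : Fin N) (l : List (Fin N)) : wordProd (a :: l) = gen a * wordProd l := by
  simp [wordProd]
lemma wordProd_append (l m : List (Fin N)) : wordProd (l ++ m) = wordProd l * wordProd m := by
  simp [wordProd]
lemma wordProd_singleton (a : Fin N) : wordProd [a] = gen a := by simp [wordProd]

lemma equiv_word (l : List (Fin N)) :
    FreeAlgebra.equivMonoidAlgebraFreeMonoid (R := ℚ) (wordProd l)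
      = MonoidAlgebra.single (FreeMonoid.ofList l) (1:ℚ) := by
  induction l with
  | nil =>
      simp [wordProd_nil, MonoidAlgebra.one_def]
  | cons a t ih =>
      rw [wordProd_cons, map_mul, ih]
      have hg : FreeAlgebra.equivMonoidAlgebraFreeMonoid (R := ℚ) (gen a)
          = MonoidAlgebra.single (FreeMonoid.of a) (1:ℚ) := by
        rw [FreeAlgebra.equivMonoidAlgebraFreeMonoid]
        simp only [AlgEquiv.ofAlgHom_apply]
        rw [gen, FreeAlgebra.lift_ι_apply]
        rfl
      rw [hg, MonoidAlgebra.single_mul_single, one_mul]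
      rfl

lemma basis_eq (w : FreeMonoid (Fin N)) :
    (FreeAlgebra.basisFreeMonoid ℚ (Fin N)) w = wordProd w.toList := by
  apply (FreeAlgebra.equivMonoidAlgebraFreeMonoid (R := ℚ) (X := Fin N)).injective
  rw [equiv_word]
  have h1 : (FreeAlgebra.basisFreeMonoid ℚ (Fin N)) w
      = (FreeAlgebra.equivMonoidAlgebraFreeMonoid (R := ℚ) (X := Fin N)).symm
          (MonoidAlgebra.single w 1) := rfl
  rw [h1, AlgEquiv.apply_symm_apply]
  rfl

lemma liftWord_word {A : Type} [AddCommGroup A] [Module ℚ A] (f : List (Fin N) → A)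
    (l : List (Fin N)) : liftWord f (wordProd l) = f l := by
  have h : wordProd l = (FreeAlgebra.basisFreeMonoid ℚ (Fin N)) (FreeMonoid.ofList l) := by
    rw [basis_eq, FreeMonoid.toList_ofList]
  rw [h, liftWord, Module.Basis.constr_basis, FreeMonoid.toList_ofList]

lemma liftWord_ext {A : Type} [AddCommGroup A] [Module ℚ A] {F G : Ass N →ₗ[ℚ] A}
    (h : ∀ l : List (Fin N), F (wordProd l) = G (wordProd l)) : F = G := by
  refine Module.Basis.ext (σ := RingHom.id ℚ) (M₁ := A) (FreeAlgebra.basisFreeMonoid ℚ (Fin N))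
    (fun w => ?_)
  rw [basis_eq]; exact h _

lemma span_wordProd : Submodule.span ℚ (Set.range (wordProd (N := N))) = ⊤ := by
  have hsub : Set.range (FreeAlgebra.basisFreeMonoid ℚ (Fin N))
      ⊆ Set.range (wordProd (N := N)) := by
    rintro _ ⟨w, rfl⟩; exact ⟨w.toList, (basis_eq w).symm⟩
  have h2 := Submodule.span_mono (R := ℚ) hsub
  rw [Module.Basis.span_eq] at h2
  exact top_le_iff.mp h2

lemma ass_induction (p : Ass N → Prop) (word : ∀ l, p (wordProd l))
    (zero : p 0) (add : ∀ a b, p a → p b → p (a + b))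
    (smul : ∀ (c : ℚ) a, p a → p (c • a)) : ∀ z, p z := by
  intro z
  have hs : z ∈ Submodule.span ℚ (Set.range (wordProd (N := N))) := by
    rw [span_wordProd]; exact Submodule.mem_top
  refine Submodule.span_induction ?_ zero (fun a b _ _ ha hb => add a b ha hb)
    (fun c a _ ha => smul c a ha) hs
  rintro _ ⟨l, rfl⟩; exact word l

/-- The coefficient of the word `l`. -/
def coeffW (l : List (Fin N)) : Ass N →ₗ[ℚ] ℚ := liftWord fun m => if m = l then 1 else 0

lemma coeffW_word (l m : List (Fin N)) : coeffW l (wordProd m) = if m = l then 1 else 0 :=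
  liftWord_word _ _

lemma coeffW_eq_repr (l : List (Fin N)) (z : Ass N) :
    coeffW l z = (FreeAlgebra.basisFreeMonoid ℚ (Fin N)).repr z (FreeMonoid.ofList l) := by
  have h : coeffW l = (Finsupp.lapply (FreeMonoid.ofList l)).comp
      ((FreeAlgebra.basisFreeMonoid ℚ (Fin N)).repr : Ass N →ₗ[ℚ] _) := by
    apply liftWord_ext
    intro m
    rw [coeffW_word]
    have h2 : wordProd m = (FreeAlgebra.basisFreeMonoid ℚ (Fin N)) (FreeMonoid.ofList m) := by
      rw [basis_eq, FreeMonoid.toList_ofList]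
    rw [h2]
    simp only [LinearMap.comp_apply, Finsupp.lapply_apply, LinearEquiv.coe_coe]
    rw [Module.Basis.repr_self]
    by_cases h : m = l
    · subst h; simp
    · rw [if_neg h, Finsupp.single_eq_of_ne (fun he => h (by
        simpa using (congrArg FreeMonoid.toList he).symm))]
  rw [h]; rfl

lemma eq_zero_of_coeffW {z : Ass N} (h : ∀ l, coeffW l z = 0) : z = 0 := by
  apply (FreeAlgebra.basisFreeMonoid ℚ (Fin N)).ext_elem
  intro w
  have h2 := h w.toList
  rw [coeffW_eq_repr] at h2
  have hw : FreeMonoid.ofList w.toList = w := rfl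
  rw [hw] at h2
  simp [h2]

lemma eq_of_coeffW {y z : Ass N} (h : ∀ l, coeffW l y = coeffW l z) : y = z := by
  have : y - z = 0 := eq_zero_of_coeffW (fun l => by rw [map_sub, h, sub_self])
  exact sub_eq_zero.mp this

end SKRV17

namespace SKRV17
variable {N : ℕ}

lemma muGr_word (l : List (Fin N)) : muGr N (wordProd l) = muWord l := liftWord_word _ _

lemma etaGr_word (l m : List (Fin N)) : etaGr N (wordProd l) (wordProd m) = etaWord l m := by
  rw [etaGr, liftWord_word]; exact liftWord_word _ _

lemma rho_word (u : Fin N → Ass N) (l : List (Fin N)) :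
    rho u (wordProd l) = rhoWord u l := liftWord_word _ _

lemma rhoWord_cons (u : Fin N → Ass N) (a : Fin N) (t : List (Fin N)) :
    rhoWord u (a :: t) = ⁅gen a, u a⁆ * wordProd t + gen a * rhoWord u t := rfl

lemma rho_gen (u : Fin N → Ass N) (i : Fin N) : rho u (gen i) = ⁅gen i, u i⁆ := by
  rw [← wordProd_singleton, rho_word, rhoWord_cons]
  simp [rhoWord, wordProd_nil, wordProd_singleton]

lemma rho_one (u : Fin N → Ass N) : rho u 1 = 0 := by
  rw [← wordProd_nil, rho_word]; rfl

/-- ρ is a derivation. -/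
lemma rho_mul (u : Fin N → Ass N) (a b : Ass N) :
    rho u (a * b) = rho u a * b + a * rho u b := by
  have key : ∀ l m : List (Fin N), rhoWord u (l ++ m)
      = rhoWord u l * wordProd m + wordProd l * rhoWord u m := by
    intro l m
    induction l with
    | nil => simp [rhoWord, wordProd_nil]
    | cons c t ih =>
        rw [List.cons_append, rhoWord_cons, rhoWord_cons, ih, wordProd_append,
          wordProd_cons]
        simp only [mul_add, add_mul, mul_assoc]
        abel
  have h : ((LinearMap.mul ℚ (Ass N)).compr₂ (rho u))
      = (LinearMap.mul ℚ (Ass N)).comp (rho u) + (LinearMap.mul ℚ (Ass N)).compl₂ (rho u) := by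
    apply liftWord_ext; intro l
    apply liftWord_ext; intro m
    simp only [LinearMap.compr₂_apply, LinearMap.mul_apply', LinearMap.comp_apply,
      LinearMap.add_apply, LinearMap.compl₂_apply]
    rw [← wordProd_append, rho_word, rho_word, rho_word, key]
  have h2 := LinearMap.congr_fun (LinearMap.congr_fun h a) b
  simpa using h2

/-- The augmentation ideal: the span of the nonempty words. -/
def Iaug (N : ℕ) : Submodule ℚ (Ass N) :=
  Submodule.span ℚ {z | ∃ l : List (Fin N), l ≠ [] ∧ z = wordProd l}

lemma word_mem_Iaug {l : List (Fin N)} (h : l ≠ []) : wordProd l ∈ Iaug N :=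
  Submodule.subset_span ⟨l, h, rfl⟩

lemma gen_mem_Iaug (i : Fin N) : gen i ∈ Iaug N := by
  rw [← wordProd_singleton]; exact word_mem_Iaug (by simp)

lemma mul_mem_Iaug_left {z : Ass N} (hz : z ∈ Iaug N) (y : Ass N) : z * y ∈ Iaug N := by
  induction y using ass_induction with
  | word m =>
      refine Submodule.span_induction ?_ ?_ ?_ ?_ hz
      · rintro _ ⟨l, hl, rfl⟩
        rw [← wordProd_append]
        exact word_mem_Iaug (by simp [hl])
      · simp only [zero_mul]; exact zero_mem _
      · intro a b _ _ ha hb; rw [add_mul]; exact add_mem ha hb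
      · intro c a _ ha; rw [smul_mul_assoc]; exact Submodule.smul_mem _ _ ha
  | zero => rw [mul_zero]; exact zero_mem _
  | add a b ha hb => rw [mul_add]; exact add_mem ha hb
  | smul c a ha => rw [mul_smul_comm]; exact Submodule.smul_mem _ _ ha

lemma mul_mem_Iaug_right {z : Ass N} (hz : z ∈ Iaug N) (y : Ass N) : y * z ∈ Iaug N := by
  induction y using ass_induction with
  | word m =>
      refine Submodule.span_induction ?_ ?_ ?_ ?_ hz
      · rintro _ ⟨l, hl, rfl⟩
        rw [← wordProd_append]
        exact word_mem_Iaug (by simp [hl])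
      · simp only [mul_zero]; exact zero_mem _
      · intro a b _ _ ha hb; rw [mul_add]; exact add_mem ha hb
      · intro c a _ ha; rw [mul_smul_comm]; exact Submodule.smul_mem _ _ ha
  | zero => rw [zero_mul]; exact zero_mem _
  | add a b ha hb => rw [add_mul]; exact add_mem ha hb
  | smul c a ha => rw [smul_mul_assoc]; exact Submodule.smul_mem _ _ ha

lemma rhoWord_mem_Iaug (u : Fin N → Ass N) (l : List (Fin N)) : rhoWord u l ∈ Iaug N := by
  induction l with
  | nil => exact zero_mem _
  | cons a t ih =>
      rw [rhoWord_cons]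
      refine add_mem (mul_mem_Iaug_left ?_ _) (mul_mem_Iaug_right ih _)
      have : (⁅gen a, u a⁆ : Ass N) = gen a * u a - u a * gen a := rfl
      rw [this]
      exact sub_mem (mul_mem_Iaug_left (gen_mem_Iaug a) _)
        (mul_mem_Iaug_right (gen_mem_Iaug a) _)

lemma rho_mem_Iaug (u : Fin N → Ass N) (z : Ass N) : rho u z ∈ Iaug N := by
  induction z using ass_induction with
  | word l => rw [rho_word]; exact rhoWord_mem_Iaug u l
  | zero => rw [map_zero]; exact zero_mem _
  | add a b ha hb => rw [map_add]; exact add_mem ha hb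
  | smul c a ha => rw [map_smul]; exact Submodule.smul_mem _ _ ha

lemma etaWord_nil_left (m : List (Fin N)) : etaWord ([] : List (Fin N)) m = 0 := by
  cases m <;> rfl

lemma etaWord_nil_right (l : List (Fin N)) : etaWord l ([] : List (Fin N)) = 0 := by
  rcases h : l.getLast? with _ | a <;> simp [etaWord, h]

lemma etaWord_cons (c : Fin N) {l : List (Fin N)} (hl : l ≠ []) (m : List (Fin N)) :
    etaWord (c :: l) m = gen c * etaWord l m := by
  obtain ⟨x, xs, rfl⟩ := List.exists_cons_of_ne_nil hl
  cases m with
  | nil => rw [etaWord_nil_right, etaWord_nil_right, mul_zero]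
  | cons b t =>
      rcases h : (x :: xs).getLast? with _ | a
      · simp at h
      · have hgl : (c :: x :: xs).getLast? = some a := by
          rw [List.getLast?_cons_cons]; exact h
        simp only [etaWord, h, hgl]
        have hd : (c :: x :: xs).dropLast = c :: (x :: xs).dropLast := rfl
        by_cases hab : a = b
        · rw [if_pos hab, if_pos hab, hd, List.cons_append, wordProd_cons, mul_neg]
        · rw [if_neg hab, if_neg hab, mul_zero]

lemma etaWord_append_left (c : List (Fin N)) {l : List (Fin N)} (hl : l ≠ [])
    (m : List (Fin N)) : etaWord (c ++ l) m = wordProd c * etaWord l m := by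
  induction c with
  | nil => simp [wordProd_nil]
  | cons a c' ih =>
      rw [List.cons_append, etaWord_cons a (by simp [hl]), ih, wordProd_cons, mul_assoc]

lemma etaWord_append_right (l : List (Fin N)) {m : List (Fin N)} (hm : m ≠ [])
    (r : List (Fin N)) : etaWord l (m ++ r) = etaWord l m * wordProd r := by
  obtain ⟨b, t, rfl⟩ := List.exists_cons_of_ne_nil hm
  rcases h : l.getLast? with _ | a
  · simp [etaWord, h]
  · simp only [List.cons_append, etaWord, h]
    by_cases hab : a = b
    · rw [if_pos hab, if_pos hab, neg_mul, ← wordProd_append]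
      simp
    · rw [if_neg hab, if_neg hab, zero_mul]

lemma eta_one_left (b : Ass N) : etaGr N 1 b = 0 := by
  have h : etaGr N (1 : Ass N) = 0 := by
    rw [← wordProd_nil]
    apply liftWord_ext (F := etaGr N (wordProd ([] : List (Fin N)))) (G := 0)
    intro m
    rw [etaGr_word, etaWord_nil_left]
    rfl
  rw [h]; rfl

lemma eta_one_right (a : Ass N) : etaGr N a 1 = 0 := by
  have h : (etaGr N).flip (1 : Ass N) = 0 := by
    rw [← wordProd_nil]
    apply liftWord_ext (F := (etaGr N).flip (wordProd ([] : List (Fin N)))) (G := 0)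
    intro m
    show etaGr N (wordProd m) (wordProd []) = 0
    rw [etaGr_word, etaWord_nil_right]
  exact LinearMap.congr_fun h a

/-- η(c·z, b) = c·η(z,b) for z in the augmentation ideal. -/
lemma eta_mul_left {z : Ass N} (hz : z ∈ Iaug N) (c b : Ass N) :
    etaGr N (c * z) b = c * etaGr N z b := by
  refine Submodule.span_induction ?_ ?_ ?_ ?_ hz (p := fun z _ => ∀ c b : Ass N,
    etaGr N (c * z) b = c * etaGr N z b) c b
  · rintro _ ⟨l, hl, rfl⟩ c b
    have h : (etaGr N).comp (LinearMap.mulRight ℚ (wordProd l))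
        = (LinearMap.mul ℚ (Ass N)).compl₂ (etaGr N (wordProd l)) := by
      apply liftWord_ext; intro lc
      apply liftWord_ext; intro m
      simp only [LinearMap.comp_apply, LinearMap.mulRight_apply, LinearMap.compl₂_apply,
        LinearMap.mul_apply']
      rw [← wordProd_append, etaGr_word, etaGr_word, etaWord_append_left lc hl]
    have h2 := LinearMap.congr_fun (LinearMap.congr_fun h c) b
    simpa using h2
  · intro c b; simp
  · intro x y _ _ hx hy c b
    rw [mul_add, map_add, LinearMap.add_apply, hx, hy, map_add, LinearMap.add_apply, mul_add]
  · intro q x _ hx c b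
    rw [mul_smul_comm, map_smul, LinearMap.smul_apply, hx, map_smul,
      LinearMap.smul_apply, mul_smul_comm]

/-- η(a, z·d) = η(a,z)·d for z in the augmentation ideal. -/
lemma eta_mul_right {z : Ass N} (hz : z ∈ Iaug N) (a d : Ass N) :
    etaGr N a (z * d) = etaGr N a z * d := by
  refine Submodule.span_induction ?_ ?_ ?_ ?_ hz (p := fun z _ => ∀ a d : Ass N,
    etaGr N a (z * d) = etaGr N a z * d) a d
  · rintro _ ⟨l, hl, rfl⟩ a d
    have h : (etaGr N).compl₂ (LinearMap.mulLeft ℚ (wordProd l))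
        = (LinearMap.mul ℚ (Ass N)).comp ((etaGr N).flip (wordProd l)) := by
      apply liftWord_ext; intro la
      apply liftWord_ext; intro m
      simp only [LinearMap.compl₂_apply, LinearMap.mulLeft_apply, LinearMap.comp_apply,
        LinearMap.mul_apply', LinearMap.flip_apply]
      rw [← wordProd_append, etaGr_word, etaGr_word, etaWord_append_right la hl]
    have h2 := LinearMap.congr_fun (LinearMap.congr_fun h a) d
    simpa using h2
  · intro a d; simp
  · intro x y _ _ hx hy a d
    rw [add_mul, map_add (etaGr N a), hx, hy, map_add (etaGr N a), add_mul]
  · intro q x _ hx a d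
    rw [smul_mul_assoc, map_smul (etaGr N a), hx, map_smul (etaGr N a), smul_mul_assoc]

end SKRV17

namespace SKRV17
variable {N : ℕ}

lemma coeffW_genMul (a c : Fin N) (v : List (Fin N)) (z : Ass N) :
    coeffW (c :: v) (gen a * z) = if a = c then coeffW v z else 0 := by
  by_cases h : a = c
  · subst h
    rw [if_pos rfl]
    have he : (coeffW (a :: v)).comp (LinearMap.mulLeft ℚ (gen a)) = coeffW v := by
      apply liftWord_ext; intro m
      simp only [LinearMap.comp_apply, LinearMap.mulLeft_apply]
      rw [← wordProd_cons, coeffW_word, coeffW_word]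
      simp [List.cons_eq_cons]
    exact LinearMap.congr_fun he z
  · rw [if_neg h]
    have he : (coeffW (c :: v)).comp (LinearMap.mulLeft ℚ (gen a)) = 0 := by
      apply liftWord_ext; intro m
      simp only [LinearMap.comp_apply, LinearMap.mulLeft_apply, LinearMap.zero_apply]
      rw [← wordProd_cons, coeffW_word]
      simp [List.cons_eq_cons, h]
    exact LinearMap.congr_fun he z

lemma coeffW_nil_genMul (a : Fin N) (z : Ass N) : coeffW ([] : List (Fin N)) (gen a * z) = 0 := by
  have he : (coeffW ([] : List (Fin N))).comp (LinearMap.mulLeft ℚ (gen a)) = 0 := by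
    apply liftWord_ext; intro m
    simp only [LinearMap.comp_apply, LinearMap.mulLeft_apply, LinearMap.zero_apply]
    rw [← wordProd_cons, coeffW_word]
    simp
  exact LinearMap.congr_fun he z

lemma coeffW_genMul_head (a : Fin N) (v : List (Fin N)) (z : Ass N) :
    coeffW v (gen a * z) = if v.head? = some a then coeffW v.tail z else 0 := by
  cases v with
  | nil => simp [coeffW_nil_genMul]
  | cons c v' =>
      rw [coeffW_genMul]
      simp only [List.head?_cons, List.tail_cons, Option.some.injEq]
      by_cases h : a = c
      · rw [if_pos h, if_pos h.symm]
      · rw [if_neg h, if_neg (fun hh => h hh.symm)]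

lemma coeffW_mulGen (a c : Fin N) (v : List (Fin N)) (z : Ass N) :
    coeffW (v ++ [c]) (z * gen a) = if a = c then coeffW v z else 0 := by
  have key : ∀ m : List (Fin N), (m ++ [a] = v ++ [c]) ↔ (m = v ∧ a = c) := by
    intro m
    constructor
    · intro h
      obtain ⟨h1, h2⟩ := List.append_inj' h rfl
      exact ⟨h1, by simpa using h2⟩
    · rintro ⟨rfl, rfl⟩; rfl
  by_cases h : a = c
  · subst h
    rw [if_pos rfl]
    have he : (coeffW (v ++ [a])).comp (LinearMap.mulRight ℚ (gen a)) = coeffW v := by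
      apply liftWord_ext; intro m
      simp only [LinearMap.comp_apply, LinearMap.mulRight_apply]
      rw [← wordProd_singleton, ← wordProd_append, coeffW_word, coeffW_word]
      simp [key m]
    exact LinearMap.congr_fun he z
  · rw [if_neg h]
    have he : (coeffW (v ++ [c])).comp (LinearMap.mulRight ℚ (gen a)) = 0 := by
      apply liftWord_ext; intro m
      simp only [LinearMap.comp_apply, LinearMap.mulRight_apply, LinearMap.zero_apply]
      rw [← wordProd_singleton, ← wordProd_append, coeffW_word]
      simp [key m, h]
    exact LinearMap.congr_fun he z

lemma coeffW_nil_mulGen (a : Fin N) (z : Ass N) : coeffW ([] : List (Fin N)) (z * gen a) = 0 := by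
  have he : (coeffW ([] : List (Fin N))).comp (LinearMap.mulRight ℚ (gen a)) = 0 := by
    apply liftWord_ext; intro m
    simp only [LinearMap.comp_apply, LinearMap.mulRight_apply, LinearMap.zero_apply]
    rw [← wordProd_singleton, ← wordProd_append, coeffW_word]
    simp
  exact LinearMap.congr_fun he z

lemma coeffW_mulGen_last (a : Fin N) (v : List (Fin N)) (z : Ass N) :
    coeffW v (z * gen a) = if v.getLast? = some a then coeffW v.dropLast z else 0 := by
  rcases List.eq_nil_or_concat v with rfl | ⟨t, c, rfl⟩
  · simp [coeffW_nil_mulGen]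
  · rw [List.concat_eq_append, coeffW_mulGen]
    simp only [List.getLast?_concat, List.dropLast_concat, Option.some.injEq]
    by_cases h : a = c
    · rw [if_pos h, if_pos h.symm]
    · rw [if_neg h, if_neg (fun hh => h hh.symm)]

lemma coeffW_bracketGen (k : Fin N) (v : List (Fin N)) (z : Ass N) :
    coeffW v ⁅gen k, z⁆ = (if v.head? = some k then coeffW v.tail z else 0)
      - (if v.getLast? = some k then coeffW v.dropLast z else 0) := by
  rw [Ring.lie_def, map_sub, coeffW_genMul_head, coeffW_mulGen_last]

lemma coeffW_bracketGen_nil (k : Fin N) (z : Ass N) :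
    coeffW ([] : List (Fin N)) ⁅gen k, z⁆ = 0 := by
  rw [coeffW_bracketGen]; simp

lemma coeffW_bracketGen_single (k : Fin N) (a : Fin N) (z : Ass N) :
    coeffW [a] ⁅gen k, z⁆ = 0 := by
  rw [coeffW_bracketGen]
  simp only [List.head?_cons, List.getLast?_singleton]
  by_cases h : a = k <;> simp [h]

lemma coeffW_partialD (i : Fin N) (v : List (Fin N)) (z : Ass N) :
    coeffW v (partialD i z) = coeffW (v ++ [i]) z := by
  have he : (coeffW v).comp (partialD i) = coeffW (v ++ [i]) := by
    apply liftWord_ext; intro m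
    simp only [LinearMap.comp_apply]
    rw [partialD, liftWord_word, coeffW_word]
    rcases List.eq_nil_or_concat m with rfl | ⟨t, c, rfl⟩
    · simp
    · rw [List.concat_eq_append]
      simp only [List.getLast?_concat, List.dropLast_concat]
      have key : (t ++ [c] = v ++ [i]) ↔ (t = v ∧ c = i) := by
        constructor
        · intro h
          obtain ⟨h1, h2⟩ := List.append_inj' h rfl
          exact ⟨h1, by simpa using h2⟩
        · rintro ⟨rfl, rfl⟩; rfl
      by_cases h : c = i
      · subst h; rw [if_pos rfl, coeffW_word]
        simp [key]
      · rw [if_neg h, if_neg (by rw [key]; tauto)]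
        simp
  exact LinearMap.congr_fun he z

/-- duplicate the letter at position `p`. -/
def dbl (p : ℕ) (l : List (Fin N)) : List (Fin N) := l.take (p+1) ++ l.drop p

lemma dbl_length {p : ℕ} {l : List (Fin N)} (h : p < l.length) :
    (dbl p l).length = l.length + 1 := by
  simp only [dbl, List.length_append, List.length_take, List.length_drop]
  omega

lemma dbl_zero_cons (c : Fin N) (v : List (Fin N)) : dbl 0 (c :: v) = c :: c :: v := by
  simp [dbl]

lemma dbl_succ_cons (q : ℕ) (c : Fin N) (v : List (Fin N)) :
    dbl (q+1) (c :: v) = c :: dbl q v := by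
  simp [dbl, List.take_succ_cons, List.drop_succ_cons]

lemma mu_coeff_word (w v : List (Fin N)) :
    coeffW v (muWord w) = -∑ p : Fin v.length, (if w = dbl (p : ℕ) v then (1:ℚ) else 0) := by
  induction w generalizing v with
  | nil =>
      have h0 : muWord ([] : List (Fin N)) = 0 := rfl
      rw [h0, map_zero]
      rw [Finset.sum_eq_zero, neg_zero]
      intro p _
      rw [if_neg (fun he => by
        have := congrArg List.length he
        rw [dbl_length p.isLt] at this
        simp at this)]
  | cons a w' ih =>
      cases w' with
      | nil =>
          have h0 : muWord [a] = 0 := rfl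
          rw [h0, map_zero]
          rw [Finset.sum_eq_zero, neg_zero]
          intro p _
          rw [if_neg (fun he => by
            have hl := congrArg List.length he
            rw [dbl_length p.isLt] at hl
            have hp := p.isLt
            simp only [List.length_cons, List.length_nil] at hl
            omega)]
      | cons b t =>
          have h0 : muWord (a :: b :: t)
              = (if a = b then -(wordProd (a :: t)) else 0) + gen a * muWord (b :: t) := rfl
          rw [h0, map_add]
          cases v with
          | nil =>
              rw [coeffW_nil_genMul, apply_ite (coeffW ([] : List (Fin N))), map_neg,
                coeffW_word, map_zero]
              simp
          | cons c v' =>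
              rw [coeffW_genMul, apply_ite (coeffW (c :: v')), map_neg, coeffW_word, map_zero]
              have hsum : ∑ p : Fin (c :: v').length, (if a :: b :: t = dbl (p:ℕ) (c :: v') then (1:ℚ) else 0)
                  = (if a :: b :: t = c :: c :: v' then (1:ℚ) else 0)
                    + ∑ q : Fin v'.length, (if a :: b :: t = c :: dbl (q:ℕ) v' then (1:ℚ) else 0) := by
                rw [show (c :: v').length = v'.length + 1 from rfl, Fin.sum_univ_succ]
                simp only [Fin.val_zero, dbl_zero_cons, Fin.val_succ, dbl_succ_cons]
              rw [hsum]
              by_cases hac : a = c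
              · subst hac
                rw [if_pos rfl, ih]
                simp only [List.cons_eq_cons, true_and]
                have hx : (if a = b then -(if t = v' then (1:ℚ) else 0) else 0)
                    = -(if b = a ∧ t = v' then (1:ℚ) else 0) := by
                  by_cases hab : a = b
                  · subst hab; simp
                  · rw [if_neg hab, if_neg (fun hh => hab hh.1.symm)]; simp
                rw [hx]
                ring
              · have e1 : (if a :: t = c :: v' then (1:ℚ) else 0) = 0 :=
                  if_neg (by simp [List.cons_eq_cons, hac])
                have e2 : (if a :: b :: t = c :: c :: v' then (1:ℚ) else 0) = 0 :=
                  if_neg (by simp [List.cons_eq_cons, hac])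
                have e3 : ∀ q : Fin v'.length,
                    (if a :: b :: t = c :: dbl (q:ℕ) v' then (1:ℚ) else 0) = 0 := fun q =>
                  if_neg (by simp [List.cons_eq_cons, hac])
                rw [if_neg hac, e2, Finset.sum_eq_zero (fun q _ => e3 q), e1]
                simp

lemma coeffW_mu (v : List (Fin N)) (z : Ass N) :
    coeffW v (muGr N z) = -∑ p : Fin v.length, coeffW (dbl (p : ℕ) v) z := by
  have he : (coeffW v).comp (muGr N) = -∑ p : Fin v.length, coeffW (dbl (p : ℕ) v) := by
    apply liftWord_ext; intro m
    simp only [LinearMap.comp_apply, LinearMap.neg_apply, LinearMap.sum_apply]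
    rw [muGr_word, mu_coeff_word]
    congr 1
    apply Finset.sum_congr rfl
    intro p _
    rw [coeffW_word]
  simpa using LinearMap.congr_fun he z

lemma etaWord_genR (l : List (Fin N)) (j : Fin N) :
    etaWord l [j] = if l.getLast? = some j then -(wordProd l) else 0 := by
  rcases h : l.getLast? with _ | a
  · have : l = [] := by
      cases l with
      | nil => rfl
      | cons x xs => simp [List.getLast?_cons] at h
    subst this
    simp [etaWord_nil_left]
  · have hl : l ≠ [] := by rintro rfl; simp at h
    have hdl : l.dropLast ++ [a] = l := by
      have hg : l.getLast hl = a := by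
        have := List.getLast?_eq_getLast hl
        rw [h] at this; exact (Option.some.injEq _ _ ▸ this.symm :)
      rw [← hg]; exact List.dropLast_append_getLast hl
    show (match l.getLast?, [j] with
      | some a, b :: t => if a = b then -(wordProd (l.dropLast ++ a :: t)) else 0
      | _, _ => 0) = _
    rw [h]
    by_cases haj : a = j
    · subst haj
      simp only [if_pos rfl]
      rw [hdl]
    · simp only [if_neg haj]
      rw [if_neg (fun hh => haj (by injection hh))]

lemma etaWord_genL (i : Fin N) (m : List (Fin N)) :
    etaWord [i] m = if m.head? = some i then -(wordProd m) else 0 := by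
  cases m with
  | nil => simp [etaWord_nil_right]
  | cons b t =>
      show (match [i].getLast?, b :: t with
        | some a, b :: t => if a = b then -(wordProd ([i].dropLast ++ a :: t)) else 0
        | _, _ => 0) = _
      have h1 : [i].getLast? = some i := rfl
      rw [h1]
      simp only [List.head?_cons]
      by_cases hib : i = b
      · subst hib
        simp only [if_pos rfl]
        rfl
      · rw [if_neg hib]; simp [Ne.symm hib]

lemma coeffW_eta_genR (j : Fin N) (v : List (Fin N)) (z : Ass N) :
    coeffW v (etaGr N z (gen j)) = if v.getLast? = some j then -(coeffW v z) else 0 := by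
  have he : (coeffW v).comp ((etaGr N).flip (gen j))
      = (if v.getLast? = some j then -(coeffW v) else 0) := by
    apply liftWord_ext; intro m
    simp only [LinearMap.comp_apply, LinearMap.flip_apply]
    rw [← wordProd_singleton, etaGr_word, etaWord_genR]
    by_cases hmv : m = v
    · subst hmv
      split_ifs <;> simp [coeffW_word]
    · split_ifs <;> simp [coeffW_word, hmv]
  have := LinearMap.congr_fun he z
  simp only [LinearMap.comp_apply, LinearMap.flip_apply] at this
  rw [this]
  split_ifs <;> simp

lemma coeffW_eta_genL (i : Fin N) (v : List (Fin N)) (z : Ass N) :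
    coeffW v (etaGr N (gen i) z) = if v.head? = some i then -(coeffW v z) else 0 := by
  have he : (coeffW v).comp (etaGr N (gen i))
      = (if v.head? = some i then -(coeffW v) else 0) := by
    apply liftWord_ext; intro m
    simp only [LinearMap.comp_apply]
    rw [← wordProd_singleton, etaGr_word, etaWord_genL]
    by_cases hmv : m = v
    · subst hmv
      split_ifs <;> simp [coeffW_word]
    · split_ifs <;> simp [coeffW_word, hmv]
  have := LinearMap.congr_fun he z
  simp only [LinearMap.comp_apply] at this
  rw [this]
  split_ifs <;> simp

/-- The coefficient consequence of `∑ ⁅xₖ, uₖ⁆ = 0`. -/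
lemma hstar {u : Fin N → Ass N} (hs : ∑ k, (⁅gen k, u k⁆ : Ass N) = 0)
    (a b : Fin N) (y : List (Fin N)) :
    coeffW (y ++ [b]) (u a) = coeffW (a :: y) (u b) := by
  have h0 := congrArg (coeffW (a :: (y ++ [b]))) hs
  rw [map_sum, map_zero] at h0
  have hterm : ∀ k, coeffW (a :: (y ++ [b])) (⁅gen k, u k⁆ : Ass N)
      = (if a = k then coeffW (y ++ [b]) (u k) else 0)
        - (if b = k then coeffW (a :: y) (u k) else 0) := by
    intro k
    rw [coeffW_bracketGen]
    congr 1
    · simp only [List.head?_cons, List.tail_cons, Option.some.injEq]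
    · rw [← List.cons_append]
      simp only [List.getLast?_concat, List.dropLast_concat, Option.some.injEq]
  rw [Finset.sum_congr rfl (fun k _ => hterm k), Finset.sum_sub_distrib,
    Finset.sum_ite_eq, Finset.sum_ite_eq] at h0
  simp only [Finset.mem_univ, if_pos] at h0
  linarith

end SKRV17

namespace SKRV17
variable {N : ℕ}

lemma eta_gen_gen (i j : Fin N) :
    etaGr N (gen i) (gen j) = if i = j then -(gen i) else 0 := by
  rw [← wordProd_singleton i, ← wordProd_singleton j, etaGr_word, etaWord_genL]
  simp only [List.head?_cons, Option.some.injEq]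
  by_cases h : i = j
  · subst h; simp
  · rw [if_neg (fun hh => h hh.symm), if_neg h]

lemma eta_defect_gen {u : Fin N → Ass N} (hs : ∑ k, (⁅gen k, u k⁆ : Ass N) = 0) (i j : Fin N) :
    rho u (etaGr N (gen i) (gen j))
      = etaGr N (rho u (gen i)) (gen j) + etaGr N (gen i) (rho u (gen j)) := by
  rw [rho_gen, rho_gen, eta_gen_gen]
  apply eq_of_coeffW; intro v
  rw [map_add, coeffW_eta_genR, coeffW_eta_genL, apply_ite (rho u), map_neg, map_zero,
    rho_gen, apply_ite (coeffW v), map_neg, map_zero]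
  match v with
  | [] => simp [coeffW_bracketGen_nil]
  | [a] => simp [coeffW_bracketGen_single]
  | a :: x :: xs =>
      rcases List.eq_nil_or_concat (x :: xs) with h | ⟨y, b, h⟩
      · exact absurd h (by simp)
      rw [List.concat_eq_append] at h
      rw [h]
      have hst := hstar hs a b y
      have hlast : (a :: (y ++ [b])).getLast? = some b := by
        rw [← List.cons_append]; exact List.getLast?_concat
      have hdrop : (a :: (y ++ [b])).dropLast = a :: y := by
        rw [← List.cons_append]; exact List.dropLast_concat
      simp only [coeffW_bracketGen, hlast, hdrop, List.head?_cons, List.tail_cons,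
        Option.some.injEq]
      by_cases hij : i = j <;> by_cases hai : a = i <;> by_cases hbi : b = i <;>
        by_cases haj : a = j <;> by_cases hbj : b = j <;> simp_all <;> linarith

lemma sum_bracket_zero_of_defect {u : Fin N → Ass N}
    (hB : ∀ i j, rho u (etaGr N (gen i) (gen j))
      = etaGr N (rho u (gen i)) (gen j) + etaGr N (gen i) (rho u (gen j))) :
    ∑ k, (⁅gen k, u k⁆ : Ass N) = 0 := by
  apply eq_zero_of_coeffW; intro v
  rw [map_sum]
  match v with
  | [] => simp [coeffW_bracketGen_nil]
  | [a] => simp [coeffW_bracketGen_single]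
  | a :: x :: xs =>
      rcases List.eq_nil_or_concat (x :: xs) with h | ⟨y, b, h⟩
      · exact absurd h (by simp)
      rw [List.concat_eq_append] at h
      rw [h]
      have hlast : (a :: (y ++ [b])).getLast? = some b := by
        rw [← List.cons_append]; exact List.getLast?_concat
      have hdrop : (a :: (y ++ [b])).dropLast = a :: y := by
        rw [← List.cons_append]; exact List.dropLast_concat
      have hE := congrArg (coeffW (a :: (y ++ [b]))) (hB a b)
      rw [rho_gen, rho_gen, eta_gen_gen, map_add, coeffW_eta_genR, coeffW_eta_genL,
        apply_ite (rho u), map_neg, map_zero, rho_gen, apply_ite (coeffW (a :: (y ++ [b]))),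
        map_neg, map_zero] at hE
      simp only [coeffW_bracketGen, hlast, hdrop, List.head?_cons, List.tail_cons,
        Option.some.injEq] at hE ⊢
      rw [Finset.sum_sub_distrib, Finset.sum_ite_eq, Finset.sum_ite_eq]
      simp only [Finset.mem_univ, if_true]
      by_cases hab : a = b
      · subst hab
        simp at hE
        linarith
      · have hba : ¬ b = a := fun hh => hab hh.symm
        simp [hab, hba] at hE
        linarith

lemma defect_mul_left (u : Fin N → Ass N) {z : Ass N} (hz : z ∈ Iaug N) (c b : Ass N)
    (h : rho u (etaGr N z b) = etaGr N (rho u z) b + etaGr N z (rho u b)) :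
    rho u (etaGr N (c * z) b)
      = etaGr N (rho u (c * z)) b + etaGr N (c * z) (rho u b) := by
  rw [eta_mul_left hz c b, rho_mul, h, rho_mul u c z, map_add, LinearMap.add_apply,
    eta_mul_left hz (rho u c) b, eta_mul_left (rho_mem_Iaug u z) c b,
    eta_mul_left hz c (rho u b), mul_add]
  abel

lemma defect_mul_right (u : Fin N → Ass N) {z : Ass N} (hz : z ∈ Iaug N) (a d : Ass N)
    (h : rho u (etaGr N a z) = etaGr N (rho u a) z + etaGr N a (rho u z)) :
    rho u (etaGr N a (z * d))
      = etaGr N (rho u a) (z * d) + etaGr N a (rho u (z * d)) := by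
  rw [eta_mul_right hz a d, rho_mul, h, rho_mul u z d, map_add,
    eta_mul_right hz (rho u a) d, eta_mul_right (rho_mem_Iaug u z) a d,
    eta_mul_right hz a (rho u d), add_mul]
  abel

lemma eta_defect_word {u : Fin N → Ass N} (hs : ∑ k, (⁅gen k, u k⁆ : Ass N) = 0)
    (l m : List (Fin N)) :
    rho u (etaGr N (wordProd l) (wordProd m))
      = etaGr N (rho u (wordProd l)) (wordProd m)
        + etaGr N (wordProd l) (rho u (wordProd m)) := by
  rcases List.eq_nil_or_concat l with rfl | ⟨l', i, rfl⟩
  · rw [wordProd_nil]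
    simp [eta_one_left, rho_one]
  cases m with
  | nil =>
      rw [wordProd_nil]
      simp [eta_one_right, rho_one]
  | cons j m' =>
      rw [List.concat_eq_append, wordProd_append, wordProd_singleton, wordProd_cons]
      exact defect_mul_left u (gen_mem_Iaug i) (wordProd l') _
        (defect_mul_right u (gen_mem_Iaug j) (gen i) (wordProd m') (eta_defect_gen hs i j))

/-- Part 1: ρ(ũ) is an η-derivation iff ũ ∈ sder. -/
lemma eta_deriv_iff (u : Fin N → Ass N) :
    (∀ a b : Ass N, rho u (etaGr N a b)
        = etaGr N (rho u a) b + etaGr N a (rho u b))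
      ↔ ∑ k, (⁅gen k, u k⁆ : Ass N) = 0 := by
  constructor
  · intro hB
    exact sum_bracket_zero_of_defect (fun i j => hB (gen i) (gen j))
  · intro hs a b
    have hBL : (etaGr N).compr₂ (rho u)
        = (etaGr N).comp (rho u) + (etaGr N).compl₂ (rho u) := by
      apply liftWord_ext; intro l
      apply liftWord_ext; intro m
      simp only [LinearMap.compr₂_apply, LinearMap.comp_apply, LinearMap.add_apply,
        LinearMap.compl₂_apply]
      exact eta_defect_word hs l m
    have h2 := LinearMap.congr_fun (LinearMap.congr_fun hBL a) b
    simpa using h2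

lemma rho_sum_gen (u : Fin N → Ass N) :
    rho u (∑ i, gen i) = ∑ k, (⁅gen k, u k⁆ : Ass N) := by
  rw [map_sum]
  exact Finset.sum_congr rfl (fun k _ => rho_gen u k)

end SKRV17

namespace SKRV17
variable {N : ℕ}

lemma muGr_one : muGr N (1 : Ass N) = 0 := by
  rw [← wordProd_nil, muGr_word]; rfl

lemma muGr_gen (i : Fin N) : muGr N (gen i) = 0 := by
  rw [← wordProd_singleton, muGr_word]; rfl

lemma muWord_append (l m : List (Fin N)) :
    muWord (l ++ m) = muWord l * wordProd m + wordProd l * muWord m + etaWord l m := by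
  induction l with
  | nil =>
      have h0 : muWord ([] : List (Fin N)) = 0 := rfl
      rw [List.nil_append, h0, zero_mul, wordProd_nil, one_mul, etaWord_nil_left, zero_add,
        add_zero]
  | cons a l' ih =>
      cases l' with
      | nil =>
          cases m with
          | nil =>
              have h1 : muWord [a] = 0 := rfl
              have h2 : muWord ([] : List (Fin N)) = 0 := rfl
              simp [h1, h2, etaWord_nil_right]
          | cons b t =>
              show (if a = b then -(wordProd (a :: t)) else 0) + gen a * muWord (b :: t) = _
              rw [etaWord_genL]
              simp only [List.head?_cons, Option.some.injEq]
              have h1 : muWord [a] = 0 := rfl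
              rw [h1, zero_mul, wordProd_singleton, zero_add]
              by_cases hab : a = b
              · subst hab
                simp only [if_pos rfl]
                abel
              · rw [if_neg hab, if_neg (fun hh => hab hh.symm)]
                abel
      | cons b t' =>
          have hli : ((a :: b :: t') ++ m) = a :: ((b :: t') ++ m) := rfl
          have hlhs : muWord ((a :: b :: t') ++ m)
              = (if a = b then -(wordProd (a :: (t' ++ m))) else 0)
                + gen a * muWord ((b :: t') ++ m) := rfl
          have hmu : muWord (a :: b :: t')
              = (if a = b then -(wordProd (a :: t')) else 0) + gen a * muWord (b :: t') := rfl
          rw [hlhs, ih, hmu, etaWord_cons a (by simp : (b :: t') ≠ []) m]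
          have hw : wordProd (a :: (t' ++ m)) = wordProd (a :: t') * wordProd m := by
            rw [← wordProd_append]; rfl
          have hwc : wordProd (a :: b :: t') = gen a * wordProd (b :: t') := wordProd_cons _ _
          rw [hw, hwc]
          simp only [mul_add, add_mul, ite_mul, zero_mul, neg_mul, mul_assoc]
          abel

/-- Product rule for `μ_gr`. -/
lemma mu_mul (a b : Ass N) :
    muGr N (a * b) = muGr N a * b + a * muGr N b + etaGr N a b := by
  have h : ((LinearMap.mul ℚ (Ass N)).compr₂ (muGr N))
      = (LinearMap.mul ℚ (Ass N)).comp (muGr N) + (LinearMap.mul ℚ (Ass N)).compl₂ (muGr N)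
        + etaGr N := by
    apply liftWord_ext; intro l
    apply liftWord_ext; intro m
    simp only [LinearMap.compr₂_apply, LinearMap.mul_apply', LinearMap.comp_apply,
      LinearMap.add_apply, LinearMap.compl₂_apply]
    rw [← wordProd_append, muGr_word, muGr_word, muGr_word, etaGr_word, muWord_append]
  have h2 := LinearMap.congr_fun (LinearMap.congr_fun h a) b
  simpa using h2

/-- Given the η-derivation property, ρ commutes with μ iff it kills the generators'
brackets after μ. -/
lemma mu_comm_iff_gen (u : Fin N → Ass N)
    (hη : ∀ a b : Ass N, rho u (etaGr N a b)
      = etaGr N (rho u a) b + etaGr N a (rho u b)) :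
    (∀ a : Ass N, rho u (muGr N a) = muGr N (rho u a))
      ↔ ∀ i : Fin N, muGr N (⁅gen i, u i⁆ : Ass N) = 0 := by
  constructor
  · intro h i
    have h2 := h (gen i)
    rw [muGr_gen, map_zero, rho_gen] at h2
    exact h2.symm
  · intro hgen
    have hword : ∀ l, rho u (muGr N (wordProd l)) = muGr N (rho u (wordProd l)) := by
      intro l
      induction l with
      | nil => rw [wordProd_nil, muGr_one, rho_one, map_zero, map_zero]
      | cons a t ih =>
          rw [wordProd_cons, mu_mul, muGr_gen, zero_mul, zero_add, map_add, rho_mul,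
            hη (gen a) (wordProd t), ih]
          rw [rho_mul u (gen a) (wordProd t), map_add, mu_mul, mu_mul, rho_gen, hgen a,
            muGr_gen, zero_mul, zero_mul, zero_add, zero_add, ← rho_gen u a]
          abel
    have hM : (rho u).comp (muGr N) = (muGr N).comp (rho u) := by
      apply liftWord_ext; intro l
      simp only [LinearMap.comp_apply]
      exact hword l
    intro a
    exact LinearMap.congr_fun hM a

end SKRV17

namespace SKRV17
variable {N : ℕ}

/-- marked-cycle coefficient function -/
def hco (u : Fin N → Ass N) : List (Fin N) → ℚ
  | [] => 0
  | a :: t => coeffW t (u a)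

/-- the cyclic sum attached to `v` -/
def scyc (u : Fin N → Ass N) (v : List (Fin N)) : ℚ :=
  ∑ p : Fin v.length, hco u (dbl (p : ℕ) v)

/-- canonical representative of the divergence -/
def Wel (u : Fin N → Ass N) : Ass N := ∑ k, gen k * partialD k (u k)

/-- sum of coefficients over all rotations -/
def phiLM (v : List (Fin N)) : Ass N →ₗ[ℚ] ℚ :=
  ∑ r : Fin v.length, coeffW (v.rotate (r : ℕ))

/-- the sder coefficient relation -/
def HS (u : Fin N → Ass N) : Prop :=
  ∀ (a b : Fin N) (y : List (Fin N)), coeffW (y ++ [b]) (u a) = coeffW (a :: y) (u b)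

variable {u : Fin N → Ass N}

lemma hco_rotate_one (hsc : HS u) (m : List (Fin N)) : hco u (m.rotate 1) = hco u m := by
  match m with
  | [] => rw [List.rotate_nil]
  | [a] => rw [show ([a] : List (Fin N)).rotate 1 = [a] by
      rw [← List.rotate_mod]; norm_num]
  | a :: c :: y =>
      have h1 : (a :: c :: y).rotate 1 = (c :: y) ++ [a] := by
        rw [List.rotate_cons_succ, List.rotate_zero]
      rw [h1]
      show coeffW (y ++ [a]) (u c) = coeffW (c :: y) (u a)
      exact hsc c a y

lemma hco_rotate (hsc : HS u) (m : List (Fin N)) (r : ℕ) : hco u (m.rotate r) = hco u m := by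
  induction r generalizing m with
  | zero => rw [List.rotate_zero]
  | succ r ih =>
      have h1 : m.rotate (r + 1) = (m.rotate 1).rotate r := by
        rw [List.rotate_rotate, Nat.add_comm]
      rw [h1, ih, hco_rotate_one hsc]

lemma rotate_concat (m : List (Fin N)) (x : Fin N) :
    (m ++ [x]).rotate ((m ++ [x]).length - 1) = x :: m := by
  have hlen : (m ++ [x]).length - 1 = m.length := by simp
  rw [hlen, List.rotate_eq_drop_append_take (by simp), List.drop_left, List.take_left]
  rfl

lemma dbl_step (a : Fin N) (t : List (Fin N)) (p : ℕ) (hp : p < t.length) :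
    dbl (p+1) (a :: t) = (dbl p (t ++ [a])).rotate (t.length + 1) := by
  have hm : dbl p (t ++ [a]) = (t.take (p+1) ++ t.drop p) ++ [a] := by
    rw [dbl, List.take_append_of_le_length (by omega),
      List.drop_append_of_le_length (by omega), List.append_assoc]
  have hlen : t.length + 1 = ((t.take (p+1) ++ t.drop p) ++ [a]).length - 1 := by
    simp only [List.length_append, List.length_take, List.length_drop,
      List.length_cons, List.length_nil]
    omega
  rw [hm, hlen, rotate_concat, dbl_succ_cons]
  rfl

lemma hco_dbl_rotate (hsc : HS u) : ∀ (p : ℕ) (v : List (Fin N)), p < v.length →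
    hco u (dbl p v) = hco u (dbl 0 (v.rotate p)) := by
  intro p
  induction p with
  | zero => intro v _; rw [List.rotate_zero]
  | succ p ih =>
      intro v hp
      match v with
      | [] => exact absurd hp (by simp)
      | a :: t =>
          have hpt : p < t.length := by
            have := hp; simp only [List.length_cons] at this; omega
          rw [dbl_step a t p hpt, hco_rotate hsc,
            ih (t ++ [a]) (by simp only [List.length_append, List.length_cons,
              List.length_nil]; omega), ← List.rotate_cons_succ]

lemma coeffW_Wel (hsc : HS u) (v : List (Fin N)) :
    coeffW v (Wel u) = hco u (dbl 0 v) := by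
  match v with
  | [] =>
      rw [Wel, map_sum, Finset.sum_eq_zero (fun k _ => coeffW_nil_genMul k _)]
      rfl
  | a :: t =>
      rw [Wel, map_sum]
      have hterm : ∀ k, coeffW (a :: t) (gen k * partialD k (u k))
          = if k = a then coeffW (t ++ [k]) (u k) else 0 := by
        intro k
        rw [coeffW_genMul, coeffW_partialD]
      rw [Finset.sum_congr rfl fun k _ => hterm k, Finset.sum_ite_eq']
      simp only [Finset.mem_univ, if_true]
      rw [hsc a a t, dbl_zero_cons]
      rfl

lemma phiLM_Wel (hsc : HS u) (v : List (Fin N)) : phiLM v (Wel u) = scyc u v := by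
  rw [phiLM, LinearMap.sum_apply, scyc]
  apply Finset.sum_congr rfl
  intro p _
  rw [coeffW_Wel hsc, hco_dbl_rotate hsc (p : ℕ) v p.isLt]

lemma dbl_head (p : ℕ) (c : Fin N) (v' : List (Fin N)) :
    ∃ t, dbl p (c :: v') = c :: t := by
  cases p with
  | zero => exact ⟨c :: v', dbl_zero_cons c v'⟩
  | succ q => exact ⟨dbl q v', dbl_succ_cons q c v'⟩

lemma getLast?_drop' : ∀ (l : List (Fin N)) (p : ℕ), p < l.length →
    (l.drop p).getLast? = l.getLast? := by
  intro l
  induction l with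
  | nil => intro p hp; simp at hp
  | cons a t ih =>
      intro p hp
      cases p with
      | zero => rw [List.drop_zero]
      | succ q =>
          have hq : q < t.length := by
            simp only [List.length_cons] at hp; omega
          rw [List.drop_succ_cons, ih q hq]
          cases t with
          | nil => simp at hq
          | cons x xs => rw [List.getLast?_cons_cons]

lemma dbl_getLast? {p : ℕ} {v : List (Fin N)} (hp : p < v.length) :
    (dbl p v).getLast? = v.getLast? := by
  rw [dbl, List.getLast?_append, getLast?_drop' v p hp]
  have hne : v ≠ [] := by intro h; rw [h] at hp; simp at hp
  obtain ⟨m, x, hmx⟩ := (List.eq_nil_or_concat v).resolve_left hne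
  rw [hmx, List.concat_eq_append, List.getLast?_concat]
  rfl

lemma mu_bracket_coeff (hsc : HS u) (i : Fin N) (v : List (Fin N)) :
    coeffW v (muGr N (⁅gen i, u i⁆ : Ass N))
      = (if v.getLast? = some i then scyc u v else 0)
        - (if v.head? = some i then scyc u v else 0) := by
  rw [Ring.lie_def, map_sub, map_sub, coeffW_mu, coeffW_mu]
  match v with
  | [] => simp [scyc]
  | c :: v' =>
      have hL : ∀ p : Fin (c :: v').length,
          coeffW (dbl (p : ℕ) (c :: v')) (gen i * u i)
            = if (c :: v').head? = some i then hco u (dbl (p : ℕ) (c :: v')) else 0 := by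
        intro p
        obtain ⟨t, ht⟩ := dbl_head (p : ℕ) c v'
        rw [ht, coeffW_genMul]
        simp only [List.head?_cons, Option.some.injEq]
        by_cases hic : c = i
        · subst hic
          rw [if_pos rfl, if_pos rfl]
          rfl
        · rw [if_neg (fun hh => hic hh.symm), if_neg hic]
      have hR : ∀ p : Fin (c :: v').length,
          coeffW (dbl (p : ℕ) (c :: v')) (u i * gen i)
            = if (c :: v').getLast? = some i then hco u (dbl (p : ℕ) (c :: v')) else 0 := by
        intro p
        rw [coeffW_mulGen_last, dbl_getLast? p.isLt]
        by_cases hgl : (c :: v').getLast? = some i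
        · rw [if_pos hgl, if_pos hgl]
          obtain ⟨t, ht⟩ := dbl_head (p : ℕ) c v'
          rcases List.eq_nil_or_concat (dbl (p : ℕ) (c :: v')) with hnil | ⟨m, x, hmx⟩
          · rw [ht] at hnil; exact absurd hnil (by simp)
          · rw [List.concat_eq_append] at hmx
            have hx : x = i := by
              have h2 := dbl_getLast? (v := c :: v') (p := (p : ℕ)) p.isLt
              rw [hmx, List.getLast?_concat, hgl] at h2
              exact Option.some_injective _ h2
            rw [hx] at hmx
            rw [hmx, List.dropLast_concat]
            calc coeffW m (u i) = hco u (i :: m) := rfl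
              _ = hco u ((m ++ [i]).rotate ((m ++ [i]).length - 1)) := by rw [rotate_concat]
              _ = hco u (m ++ [i]) := hco_rotate hsc _ _
        · rw [if_neg hgl, if_neg hgl]
      rw [Finset.sum_congr rfl fun p _ => hL p, Finset.sum_congr rfl fun p _ => hR p]
      by_cases h1 : (c :: v').getLast? = some i <;> by_cases h2 : (c :: v').head? = some i <;>
        simp [h1, h2, scyc] <;> ring

lemma mu_gen_zero_iff (hsc : HS u) :
    (∀ i : Fin N, muGr N (⁅gen i, u i⁆ : Ass N) = 0)
      ↔ ∀ v : List (Fin N), v.head? ≠ v.getLast? → scyc u v = 0 := by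
  constructor
  · intro h v hne
    match v with
    | [] => exact absurd rfl hne
    | c :: v' =>
        rcases List.eq_nil_or_concat (c :: v') with hnil | ⟨m, b, hmb⟩
        · simp at hnil
        rw [List.concat_eq_append] at hmb
        have hlast : (c :: v').getLast? = some b := by
          rw [hmb]; exact List.getLast?_concat
        have h2 := congrArg (coeffW (c :: v')) (h b)
        rw [map_zero, mu_bracket_coeff hsc, if_pos hlast,
          if_neg (fun hh => hne (hh.trans hlast.symm))] at h2
        linarith
  · intro h i
    apply eq_zero_of_coeffW
    intro v
    rw [mu_bracket_coeff hsc]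
    by_cases heq : v.head? = v.getLast?
    · rw [← heq]
      exact sub_self _
    · rw [h v heq]
      simp

end SKRV17

namespace SKRV17
variable {N : ℕ}

lemma comm_mem_trRel (a b : Ass N) : a * b - b * a ∈ trRel N :=
  Submodule.subset_span ⟨a, b, rfl⟩

lemma rotate_append_self (l m : List (Fin N)) : (l ++ m).rotate l.length = m ++ l := by
  rw [List.rotate_eq_drop_append_take (by simp), List.drop_left, List.take_left]

lemma word_sub_rotate_mem (l : List (Fin N)) (r : ℕ) :
    wordProd l - wordProd (l.rotate r) ∈ trRel N := by
  rcases Nat.eq_zero_or_pos l.length with h0 | hpos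
  · have hnil : l = [] := List.eq_nil_of_length_eq_zero h0
    subst hnil
    rw [List.rotate_nil, sub_self]
    exact zero_mem _
  · have hr : r % l.length ≤ l.length := le_of_lt (Nat.mod_lt _ hpos)
    rw [← List.rotate_mod, List.rotate_eq_drop_append_take hr]
    have hl : wordProd l = wordProd (l.take (r % l.length) ++ l.drop (r % l.length)) := by
      rw [List.take_append_drop]
    rw [hl, wordProd_append, wordProd_append]
    exact comm_mem_trRel _ _

lemma phiLM_word (v w : List (Fin N)) :
    phiLM v (wordProd w) = ∑ r : Fin v.length, (if w = v.rotate (r : ℕ) then (1:ℚ) else 0) := by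
  rw [phiLM, LinearMap.sum_apply]
  exact Finset.sum_congr rfl fun r _ => coeffW_word _ _

lemma phiLM_rotate (v : List (Fin N)) (s : ℕ) :
    phiLM (v.rotate s) = phiLM v := by
  rcases Nat.eq_zero_or_pos v.length with h0 | hpos
  · rw [List.eq_nil_of_length_eq_zero h0, List.rotate_nil]
  · haveI : NeZero v.length := ⟨by omega⟩
    rw [phiLM, phiLM]
    refine Fintype.sum_equiv ((finCongr (List.length_rotate v s)).trans
      (Equiv.addRight (⟨s % v.length, Nat.mod_lt _ hpos⟩ : Fin v.length))) _ _ (fun r => ?_)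
    congr 1
    rw [List.rotate_rotate]
    have hval : ((((finCongr (List.length_rotate v s)).trans
        (Equiv.addRight (⟨s % v.length, Nat.mod_lt _ hpos⟩ : Fin v.length))) r : Fin v.length) : ℕ)
        = ((r : ℕ) + s % v.length) % v.length := rfl
    rw [hval, ← List.rotate_mod v (s + (r : ℕ))]
    congr 1
    rw [Nat.add_mod_mod, Nat.add_comm]

lemma phiLM_word_comm (v l m : List (Fin N)) :
    phiLM v (wordProd (l ++ m)) = phiLM v (wordProd (m ++ l)) := by
  rcases Nat.eq_zero_or_pos v.length with h0 | hpos
  · haveI : IsEmpty (Fin v.length) := by rw [h0]; infer_instance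
    rw [phiLM_word, phiLM_word, Finset.univ_eq_empty, Finset.sum_empty, Finset.sum_empty]
  · haveI : NeZero v.length := ⟨by omega⟩
    rw [phiLM_word, phiLM_word]
    refine Fintype.sum_equiv
      (Equiv.addRight (⟨l.length % v.length, Nat.mod_lt _ hpos⟩ : Fin v.length)) _ _
      (fun r => ?_)
    have hval : (((Equiv.addRight (⟨l.length % v.length, Nat.mod_lt _ hpos⟩ : Fin v.length)) r
        : Fin v.length) : ℕ) = ((r : ℕ) + l.length % v.length) % v.length := rfl
    rw [hval]
    refine if_congr ?_ rfl rfl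
    constructor
    · intro h
      have h2 : m ++ l = v.rotate ((r : ℕ) + l.length) := by
        rw [← rotate_append_self l m, h, List.rotate_rotate]
      rw [h2, ← List.rotate_mod, Nat.add_mod_mod, List.rotate_mod]
    · intro h
      have hlen : v.length = l.length + m.length := by
        have hh := congrArg List.length h
        simp only [List.length_append, List.length_rotate] at hh
        omega
      have hlen2 : m.length + l.length = v.length := by omega
      have h2 : l ++ m = v.rotate ((((r : ℕ) + l.length % v.length) % v.length) + m.length) := by
        rw [← rotate_append_self m l, h, List.rotate_rotate]
      rw [h2, ← List.rotate_mod, Nat.mod_add_mod, Nat.add_right_comm, Nat.add_mod_mod,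
        Nat.add_assoc, hlen2, Nat.add_mod_right, Nat.mod_eq_of_lt r.isLt]

lemma phiLM_mul_comm (v : List (Fin N)) (a b : Ass N) :
    phiLM v (a * b) = phiLM v (b * a) := by
  have h : (LinearMap.mul ℚ (Ass N)).compr₂ (phiLM v)
      = ((LinearMap.mul ℚ (Ass N)).compr₂ (phiLM v)).flip := by
    apply liftWord_ext; intro l
    apply liftWord_ext; intro m
    simp only [LinearMap.compr₂_apply, LinearMap.mul_apply', LinearMap.flip_apply]
    rw [← wordProd_append, ← wordProd_append]
    exact phiLM_word_comm v l m
  have h2 := LinearMap.congr_fun (LinearMap.congr_fun h a) b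
  simpa using h2

lemma phiLM_trRel (v : List (Fin N)) {z : Ass N} (hz : z ∈ trRel N) : phiLM v z = 0 := by
  refine Submodule.span_induction ?_ ?_ ?_ ?_ hz
  · rintro _ ⟨a, b, rfl⟩
    rw [map_sub, phiLM_mul_comm, sub_self]
  · exact map_zero _
  · intro x y _ _ hx hy; rw [map_add, hx, hy, add_zero]
  · intro c x _ hx; rw [map_smul, hx, smul_zero]

/-- averaging over rotations -/
def rotAvg (N : ℕ) : Ass N →ₗ[ℚ] Ass N := liftWord fun l =>
  if l = [] then 0
  else ((l.length : ℚ))⁻¹ • ∑ r : Fin l.length, wordProd (l.rotate (r : ℕ))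

lemma sub_rotAvg_mem {l : List (Fin N)} (hl : l ≠ []) :
    wordProd l - rotAvg N (wordProd l) ∈ trRel N := by
  rw [rotAvg, liftWord_word, if_neg hl]
  have hd : (l.length : ℚ) ≠ 0 := by
    simp only [ne_eq, Nat.cast_eq_zero]
    intro h
    exact hl (List.eq_nil_of_length_eq_zero h)
  have key : wordProd l - ((l.length : ℚ))⁻¹ • ∑ r : Fin l.length, wordProd (l.rotate (r : ℕ))
      = ((l.length : ℚ))⁻¹ • ∑ r : Fin l.length, (wordProd l - wordProd (l.rotate (r : ℕ))) := by
    rw [Finset.sum_sub_distrib, smul_sub, Finset.sum_const, Finset.card_univ, Fintype.card_fin,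
      ← Nat.cast_smul_eq_nsmul ℚ, smul_smul, inv_mul_cancel₀ hd, one_smul]
  rw [key]
  exact Submodule.smul_mem _ _ (Submodule.sum_mem _ fun r _ => word_sub_rotate_mem l (r : ℕ))

lemma coeffW_rotAvg (v : List (Fin N)) (z : Ass N) :
    coeffW v (rotAvg N z) = if v = [] then 0 else ((v.length : ℚ))⁻¹ * phiLM v z := by
  have he : (coeffW v).comp (rotAvg N)
      = if v = [] then (0 : Ass N →ₗ[ℚ] ℚ) else ((v.length : ℚ))⁻¹ • phiLM v := by
    apply liftWord_ext; intro w
    simp only [LinearMap.comp_apply]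
    rw [rotAvg, liftWord_word]
    by_cases hv : v = []
    · rw [if_pos hv]
      subst hv
      by_cases hw : w = []
      · rw [if_pos hw, map_zero]; rfl
      · rw [if_neg hw, map_smul, map_sum]
        rw [Finset.sum_eq_zero (fun r _ => by
          rw [coeffW_word, if_neg (fun hh => hw (by
            have := congrArg List.length hh
            simp only [List.length_rotate, List.length_nil] at this
            exact List.eq_nil_of_length_eq_zero this))]), smul_zero]
        rfl
    · rw [if_neg hv]
      simp only [LinearMap.smul_apply]
      by_cases hw : w = []
      · rw [if_pos hw, map_zero]
        subst hw
        rw [phiLM_word, Finset.sum_eq_zero (fun r _ => by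
          rw [if_neg (fun hh => hv (by
            have := congrArg List.length hh
            simp only [List.length_rotate, List.length_nil] at this
            exact List.eq_nil_of_length_eq_zero this.symm))]), smul_zero]
      · rw [if_neg hw, map_smul, map_sum]
        rw [phiLM_word]
        by_cases hlen : w.length = v.length
        · have hwpos : 0 < v.length := by
            cases v with
            | nil => exact absurd rfl hv
            | cons c t => simp
          haveI : NeZero v.length := ⟨by omega⟩
          have hsum : (∑ r : Fin w.length, coeffW v (wordProd (w.rotate (r : ℕ))))
              = ∑ r : Fin v.length, (if w = v.rotate (r : ℕ) then (1:ℚ) else 0) := by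
            refine Fintype.sum_equiv ((finCongr hlen).trans (Equiv.neg (Fin v.length))) _ _
              (fun r => ?_)
            rw [coeffW_word]
            have hval : ((((finCongr hlen).trans (Equiv.neg (Fin v.length))) r
                : Fin v.length) : ℕ) = (v.length - (r : ℕ)) % v.length := rfl
            rw [hval]
            refine if_congr ?_ rfl rfl
            rw [List.rotate_eq_iff]
            have hmod : (r : ℕ) % v.length = (r : ℕ) := by
              rw [Nat.mod_eq_of_lt (hlen ▸ r.isLt)]
            rw [hmod, ← List.rotate_mod]
          rw [hsum, hlen]
        · rw [Finset.sum_eq_zero (fun r _ => by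
            rw [coeffW_word, if_neg (fun hh => hlen (by
              have := congrArg List.length hh
              simpa using this))]), smul_zero]
          rw [Finset.sum_eq_zero (fun r _ => by
            rw [if_neg (fun hh => hlen (by
              have hx := congrArg List.length hh
              simpa using hx))])]
          rw [smul_zero]
  have h2 := LinearMap.congr_fun he z
  simp only [LinearMap.comp_apply] at h2
  rw [h2]
  by_cases hv : v = []
  · rw [if_pos hv, if_pos hv]; rfl
  · rw [if_neg hv, if_neg hv]; rfl

lemma coeffW_nil_Iaug {z : Ass N} (hz : z ∈ Iaug N) : coeffW [] z = 0 := by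
  refine Submodule.span_induction ?_ ?_ ?_ ?_ hz
  · rintro _ ⟨l, hl, rfl⟩
    rw [coeffW_word, if_neg hl]
  · exact map_zero _
  · intro x y _ _ hx hy; rw [map_add, hx, hy, add_zero]
  · intro c x _ hx; rw [map_smul, hx, smul_zero]

lemma mem_trRel_of_phi {z : Ass N} (hzI : z ∈ Iaug N)
    (h : ∀ v : List (Fin N), v ≠ [] → phiLM v z = 0) : z ∈ trRel N := by
  have hsub : z - rotAvg N z ∈ trRel N := by
    refine Submodule.span_induction ?_ ?_ ?_ ?_ hzI
      (p := fun z _ => z - rotAvg N z ∈ trRel N)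
    · rintro _ ⟨l, hl, rfl⟩; exact sub_rotAvg_mem hl
    · show (0 : Ass N) - rotAvg N 0 ∈ trRel N
      rw [map_zero, sub_zero]; exact zero_mem _
    · intro x y _ _ hx hy
      show x + y - rotAvg N (x + y) ∈ trRel N
      rw [map_add]
      have hsplit : x + y - (rotAvg N x + rotAvg N y)
          = (x - rotAvg N x) + (y - rotAvg N y) := by abel
      rw [hsplit]
      exact add_mem hx hy
    · intro c x _ hx
      show c • x - rotAvg N (c • x) ∈ trRel N
      rw [map_smul]
      have hsplit : c • x - c • rotAvg N x = c • (x - rotAvg N x) := by rw [smul_sub]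
      rw [hsplit]
      exact Submodule.smul_mem _ _ hx
  have hA : rotAvg N z = 0 := by
    apply eq_zero_of_coeffW
    intro v
    rw [coeffW_rotAvg]
    by_cases hv : v = []
    · rw [if_pos hv]
    · rw [if_neg hv, h v hv, mul_zero]
  rw [hA, sub_zero] at hsub
  exact hsub

end SKRV17

namespace SKRV17
variable {N : ℕ}

/-- substitution `x_a ↦ X`, other generators to 0 -/
def sigA (a : Fin N) : Ass N →ₐ[ℚ] Polynomial ℚ :=
  FreeAlgebra.lift ℚ (fun k => if k = a then Polynomial.X else (0 : Polynomial ℚ))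

lemma sigA_gen (a k : Fin N) :
    sigA a (gen k) = if k = a then Polynomial.X else 0 := by
  rw [sigA, gen, FreeAlgebra.lift_ι_apply]

lemma sigA_word (a : Fin N) (l : List (Fin N)) :
    sigA a (wordProd l)
      = if l = List.replicate l.length a then Polynomial.X ^ l.length else 0 := by
  induction l with
  | nil => simp [wordProd_nil]
  | cons c t ih =>
      rw [wordProd_cons, map_mul, sigA_gen, ih]
      by_cases hca : c = a
      · subst hca
        rw [if_pos rfl]
        by_cases hrep : t = List.replicate t.length c
        · rw [if_pos hrep, if_pos (by
            rw [List.length_cons, List.replicate_succ, ← hrep]), List.length_cons, pow_succ']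
        · rw [if_neg hrep, mul_zero, if_neg (by
            rw [List.length_cons, List.replicate_succ]
            intro hh
            exact hrep (List.cons_eq_cons.mp hh).2)]
      · rw [if_neg hca, zero_mul, if_neg (by
          rw [List.length_cons, List.replicate_succ]
          intro hh
          exact hca (List.cons_eq_cons.mp hh).1)]

/-- the Lie subalgebra of scalar multiples of `X` pulled back -/
def polyK (a : Fin N) : LieSubalgebra ℚ (Ass N) :=
  { Submodule.comap (sigA a).toLinearMap (Submodule.span ℚ {Polynomial.X}) with
    lie_mem' := by
      intro x y _ _
      show sigA a ⁅x, y⁆ ∈ Submodule.span ℚ {Polynomial.X}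
      rw [Ring.lie_def, map_sub, map_mul, map_mul, mul_comm, sub_self]
      exact zero_mem _ }

lemma sigA_mem_span {z : Ass N} (hz : z ∈ lieN N) (a : Fin N) :
    sigA a z ∈ Submodule.span ℚ {Polynomial.X} := by
  have hK : z ∈ polyK a := by
    rw [lieN] at hz
    refine (LieSubalgebra.mem_lieSpan.mp hz) (polyK a) ?_
    rintro _ ⟨k, rfl⟩
    show sigA a (gen k) ∈ Submodule.span ℚ {Polynomial.X}
    rw [sigA_gen]
    by_cases hka : k = a
    · rw [if_pos hka]; exact Submodule.subset_span rfl
    · rw [if_neg hka]; exact zero_mem _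
  exact hK

lemma lie_coeff_replicate {z : Ass N} (hz : z ∈ lieN N) (a : Fin N) {d : ℕ} (hd : 2 ≤ d) :
    coeffW (List.replicate d a) z = 0 := by
  have hrep : coeffW (List.replicate d a)
      = (Polynomial.lcoeff ℚ d).comp ((sigA a).toLinearMap) := by
    apply liftWord_ext
    intro l
    simp only [LinearMap.comp_apply, AlgHom.toLinearMap_apply, Polynomial.lcoeff_apply]
    rw [coeffW_word, sigA_word]
    by_cases hl : l = List.replicate d a
    · have hlen : l.length = d := by rw [hl, List.length_replicate]
      rw [if_pos hl, if_pos (by rw [hl, List.length_replicate]), Polynomial.coeff_X_pow,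
        if_pos hlen.symm]
    · rw [if_neg hl]
      by_cases hrep2 : l = List.replicate l.length a
      · rw [if_pos hrep2, Polynomial.coeff_X_pow, if_neg (fun hdl => hl (by
          rw [hdl]; exact hrep2))]
      · rw [if_neg hrep2, Polynomial.coeff_zero]
  rw [hrep]
  simp only [LinearMap.comp_apply, AlgHom.toLinearMap_apply, Polynomial.lcoeff_apply]
  obtain ⟨c, hc⟩ := Submodule.mem_span_singleton.mp (sigA_mem_span hz a)
  rw [← hc, Polynomial.coeff_smul, Polynomial.coeff_X, if_neg (by omega), smul_zero]

/-- every word is constant or contains two adjacent distinct letters -/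
lemma const_or_adj : ∀ (t : List (Fin N)) (a : Fin N),
    (a :: t = List.replicate (a :: t).length a)
      ∨ ∃ l₁ x y l₂, x ≠ y ∧ a :: t = l₁ ++ x :: y :: l₂ := by
  intro t
  induction t with
  | nil => intro a; left; rfl
  | cons b t' ih =>
      intro a
      by_cases hab : a = b
      · rcases ih b with h | ⟨l₁, x, y, l₂, hxy, he⟩
        · left
          subst hab
          rw [List.length_cons, List.replicate_succ, ← h]
        · right
          exact ⟨a :: l₁, x, y, l₂, hxy, by rw [List.cons_append, ← he]⟩
      · right
        exact ⟨[], a, b, t', hab, rfl⟩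

end SKRV17

namespace SKRV17
variable {N : ℕ} {u : Fin N → Ass N}

lemma Wel_mem_Iaug (u : Fin N → Ass N) : Wel u ∈ Iaug N :=
  Submodule.sum_mem _ fun k _ => mul_mem_Iaug_left (gen_mem_Iaug k) _

lemma phiLM_gen {v : List (Fin N)} (hv : 2 ≤ v.length) (i : Fin N) :
    phiLM v (gen i) = 0 := by
  rw [← wordProd_singleton, phiLM_word]
  exact Finset.sum_eq_zero fun r _ => if_neg (fun hh => by
    have hll := congrArg List.length hh
    simp only [List.length_rotate, List.length_cons, List.length_nil] at hll
    omega)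

lemma divergence_eq (u : Fin N → Ass N) : divergence u = trM N (Wel u) := by
  rw [divergence, Wel, map_sum]

lemma IsTDer' (hu : IsTDer u) (i : Fin N) : u i ∈ lieN N := hu i

/-- Direction A core. -/
lemma div_of_scyc (hu : IsTDer u) (hsc : HS u)
    (h0 : ∀ v : List (Fin N), v.head? ≠ v.getLast? → scyc u v = 0) :
    ∃ cf : Fin N → ℚ, trM N (Wel u) = ∑ i, cf i • trM N (gen i) := by
  refine ⟨fun i => coeffW [i] (Wel u), ?_⟩
  set z := Wel u - ∑ i, coeffW [i] (Wel u) • gen i with hz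
  have hzI : z ∈ Iaug N :=
    sub_mem (Wel_mem_Iaug u) (Submodule.sum_mem _ fun i _ =>
      Submodule.smul_mem _ _ (gen_mem_Iaug i))
  have hphi : ∀ v : List (Fin N), v ≠ [] → phiLM v z = 0 := by
    intro v hv
    rw [hz, map_sub, map_sum]
    match v with
    | [c] =>
        have hphi1 : phiLM [c] = coeffW ([c] : List (Fin N)) := by
          show ∑ r : Fin 1, coeffW (([c] : List (Fin N)).rotate ((r : Fin 1) : ℕ)) = _
          rw [Fin.sum_univ_one]
          rw [show (((0 : Fin 1)) : ℕ) = 0 from rfl, List.rotate_zero]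
        rw [hphi1]
        have hterm : ∀ i : Fin N,
            coeffW ([c] : List (Fin N)) (coeffW [i] (Wel u) • gen i)
              = if i = c then coeffW [i] (Wel u) else 0 := by
          intro i
          rw [map_smul, ← wordProd_singleton, coeffW_word]
          by_cases hic : i = c
          · rw [if_pos (by rw [hic]), if_pos hic, smul_eq_mul, mul_one]
          · rw [if_neg (by simp [List.cons_eq_cons, hic]), if_neg hic, smul_eq_mul, mul_zero]
        rw [Finset.sum_congr rfl fun i _ => hterm i, Finset.sum_ite_eq']
        simp only [Finset.mem_univ, if_true]
        exact sub_self _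
    | a :: b :: t =>
        have hlen2 : 2 ≤ (a :: b :: t).length := by simp
        rw [Finset.sum_eq_zero (fun i _ => by
          rw [map_smul, phiLM_gen hlen2, smul_zero]), sub_zero]
        rcases const_or_adj (b :: t) a with hconst | ⟨l₁, x, y, l₂, hxy, he⟩
        · obtain ⟨d, hd2, hda⟩ : ∃ d, 2 ≤ d ∧ a :: b :: t = List.replicate d a :=
            ⟨(a :: b :: t).length, by simp, hconst⟩
          rw [hda, phiLM, LinearMap.sum_apply]
          apply Finset.sum_eq_zero
          intro r _
          rw [List.rotate_replicate, coeffW_Wel hsc]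
          have hda' : List.replicate d a = a :: List.replicate (d - 1) a := by
            match d, hd2 with
            | (e+2), _ => rw [List.replicate_succ]; rfl
          rw [hda', dbl_zero_cons]
          show coeffW (a :: List.replicate (d - 1) a) (u a) = 0
          rw [← hda']
          exact lie_coeff_replicate (hu a) a hd2
        · have hv2 : (a :: b :: t) = (l₁ ++ [x]) ++ (y :: l₂) := by
            rw [he]; simp
          have hrot : ((l₁ ++ [x]) ++ (y :: l₂)).rotate (l₁ ++ [x]).length
              = (y :: l₂) ++ (l₁ ++ [x]) := rotate_append_self _ _
          have hphiw : phiLM (a :: b :: t) = phiLM ((y :: l₂) ++ (l₁ ++ [x])) := by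
            rw [hv2, ← hrot, phiLM_rotate]
          rw [hphiw, phiLM_Wel hsc]
          apply h0
          have hhead : ((y :: l₂) ++ (l₁ ++ [x])).head? = some y := rfl
          have hlast : ((y :: l₂) ++ (l₁ ++ [x])).getLast? = some x := by
            rw [List.getLast?_append, List.getLast?_concat]
            rfl
          rw [hhead, hlast]
          intro hh
          exact hxy ((Option.some_injective _ hh)).symm
  have hzmem := mem_trRel_of_phi hzI hphi
  have hzT : trM N z = 0 := by
    rw [trM, Submodule.mkQ_apply]
    exact (Submodule.Quotient.mk_eq_zero _).mpr hzmem
  have hsplit : trM N (Wel u) = trM N z + ∑ i, coeffW [i] (Wel u) • trM N (gen i) := by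
    rw [hz, map_sub, map_sum]
    simp only [map_smul]
    abel
  rw [hsplit, hzT, zero_add]

/-- Direction B core. -/
lemma scyc_of_div (hsc : HS u) {cf : Fin N → ℚ}
    (hdiv : trM N (Wel u) = ∑ i, cf i • trM N (gen i)) :
    ∀ v : List (Fin N), v.head? ≠ v.getLast? → scyc u v = 0 := by
  intro v hne
  have hlen2 : 2 ≤ v.length := by
    match v with
    | [] => exact absurd rfl hne
    | [c] => exact absurd rfl hne
    | a :: b :: t => simp
  have hmem : Wel u - ∑ i, cf i • gen i ∈ trRel N := by
    have h1 : trM N (Wel u) = trM N (∑ i, cf i • gen i) := by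
      rw [hdiv, map_sum]
      simp only [map_smul]
    rw [trM, Submodule.mkQ_apply, Submodule.mkQ_apply] at h1
    exact (Submodule.Quotient.eq _).mp h1
  rw [← phiLM_Wel hsc]
  have hsplit : phiLM v (Wel u)
      = phiLM v (Wel u - ∑ i, cf i • gen i) + phiLM v (∑ i, cf i • gen i) := by
    rw [map_sub]
    abel
  rw [hsplit, phiLM_trRel v hmem, zero_add, map_sum]
  exact Finset.sum_eq_zero fun i _ => by rw [map_smul, phiLM_gen hlen2, smul_zero]

end SKRV17

/-- `ũ ∈ krv_n^0` iff `ρ(ũ)` commutes with `η_gr` and with `μ_gr`. -/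
theorem statement17 (n : ℕ) (u : Fin n → Ass n) (hu : IsTDer u) :
    IsKRV0 u ↔
      ((∀ a b : Ass n,
          rho u (etaGr n a b) = etaGr n (rho u a) b + etaGr n a (rho u b)) ∧
        (∀ a : Ass n, rho u (muGr n a) = muGr n (rho u a))) := by
  constructor
  · rintro ⟨⟨_, hsder⟩, cf, hdiv⟩
    have hs : ∑ k, (⁅gen k, u k⁆ : Ass n) = 0 := by
      rw [← SKRV17.rho_sum_gen]; exact hsder
    have hη := (SKRV17.eta_deriv_iff u).mpr hs
    refine ⟨hη, ?_⟩
    have hsc : SKRV17.HS u := fun a b y => SKRV17.hstar hs a b y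
    refine (SKRV17.mu_comm_iff_gen u hη).mpr ((SKRV17.mu_gen_zero_iff hsc).mpr ?_)
    refine SKRV17.scyc_of_div hsc (cf := cf) ?_
    rw [← SKRV17.divergence_eq]
    exact hdiv
  · rintro ⟨hη, hμ⟩
    have hs := (SKRV17.eta_deriv_iff u).mp hη
    have hsc : SKRV17.HS u := fun a b y => SKRV17.hstar hs a b y
    have h0 := (SKRV17.mu_gen_zero_iff hsc).mp ((SKRV17.mu_comm_iff_gen u hη).mp hμ)
    obtain ⟨cf, hcf⟩ := SKRV17.div_of_scyc hu hsc h0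
    exact ⟨⟨hu, by rw [SKRV17.rho_sum_gen]; exact hs⟩, cf, by
      rw [SKRV17.divergence_eq]; exact hcf⟩

end
end
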